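/- arXiv:2212.10738 — 9 statements merged into one kernel-verified Lean document; each statement's English description precedes it below -/
import Mathlib

section
/- Let H be an m × w matrix over ZMod 2 all of whose columns are nonzero and pairwise distinct (the parity-check matrix of a classical code of distance at least 3), and let F be the 3-fold stack of H. In the ideal flagged extraction circuit for a weight-(w+1) stabilizer with flag matrix F, any two error configurations (e₁ₛ, e₁f) and (e₂ₛ, e₂f), each of total weight at most 1, that produce the same observed flag pattern (pat(e₁ₛ) + e₁f = pat(e₂ₛ) + e₂f) satisfy dat(e₁ₛ) + dat(e₂ₛ) ∈ {0, 𝟙}, where 𝟙 is the all-ones vector; that is, the two errors propagate to the data identically up to the full stabilizer, so a unique fault-tolerant correction can be assigned to every flag pattern. -/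
/-- The `r`-fold stack of an `m × w` matrix `H` over `ZMod 2`. -/
def stackMatrix (r m w : ℕ) (H : Matrix (Fin m) (Fin w) (ZMod 2)) :
    Matrix (Fin r × Fin m) (Fin w) (ZMod 2) :=
  fun p j => H p.2 j

/-- Flag pattern of syndrome-error location `p` in the ideal flagged extraction circuit
with flag matrix `F` (the stack of `H`): column `p` of `F` for `1 ≤ p ≤ w`, and `0` for
the boundary locations `p = 0` and `p = w + 1`. -/
def idealPat (r m w : ℕ) (H : Matrix (Fin m) (Fin w) (ZMod 2)) (p : Fin (w + 2)) :
    Fin r × Fin m → ZMod 2 :=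
  if h : 1 ≤ (p : ℕ) ∧ (p : ℕ) ≤ w then
    fun q => stackMatrix r m w H q ⟨(p : ℕ) - 1, by omega⟩
  else 0

/-- Data propagation of syndrome-error location `p`: the indicator vector of
`{p, …, w} ⊆ Fin (w+1)`. -/
def idealDat (w : ℕ) (p : Fin (w + 2)) : Fin (w + 1) → ZMod 2 :=
  fun j => if (p : ℕ) ≤ (j : ℕ) then 1 else 0

/-- Linear extension of `idealPat` to syndrome-error vectors. -/
def idealPatV (r m w : ℕ) (H : Matrix (Fin m) (Fin w) (ZMod 2))
    (e_s : Fin (w + 2) → ZMod 2) : Fin r × Fin m → ZMod 2 :=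
  ∑ p, e_s p • idealPat r m w H p

/-- Linear extension of `idealDat` to syndrome-error vectors. -/
def idealDatV (w : ℕ) (e_s : Fin (w + 2) → ZMod 2) : Fin (w + 1) → ZMod 2 :=
  ∑ p, e_s p • idealDat w p

lemma zmod2_ne_zero {x : ZMod 2} (h : x ≠ 0) : x = 1 := by
  revert h; revert x; decide

lemma norm_le_one_cases {α : Type*} [Fintype α] [DecidableEq α] (e : α → ZMod 2)
    (h : hammingNorm e ≤ 1) : e = 0 ∨ ∃ p, e = Pi.single p 1 := by
  by_cases h0 : e = 0
  · exact Or.inl h0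
  · right
    obtain ⟨p, hp⟩ := Function.ne_iff.mp h0
    refine ⟨p, funext fun q => ?_⟩
    by_cases hq : q = p
    · subst hq
      simp only [Pi.single_eq_same]
      exact zmod2_ne_zero hp
    · simp only [Pi.single_eq_of_ne hq]
      by_contra hqz
      have h2 : 1 < hammingNorm e := by
        rw [hammingNorm]
        rw [Finset.one_lt_card_iff]
        exact ⟨q, p, by simpa using hqz, by simpa using hp, hq⟩
      omega

lemma norm_single {α : Type*} [Fintype α] [DecidableEq α] (p : α) :
    1 ≤ hammingNorm (Pi.single p 1 : α → ZMod 2) := by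
  have h : (Pi.single p 1 : α → ZMod 2) ≠ 0 := by
    intro h; have := congrFun h p; simp at this
  have := hammingNorm_pos_iff.mpr h
  omega

lemma patV_zero (r m w : ℕ) (H : Matrix (Fin m) (Fin w) (ZMod 2)) :
    idealPatV r m w H 0 = 0 := by
  simp [idealPatV]

lemma datV_zero (w : ℕ) : idealDatV w 0 = 0 := by
  simp [idealDatV]

lemma patV_single (r m w : ℕ) (H : Matrix (Fin m) (Fin w) (ZMod 2)) (p : Fin (w + 2)) :
    idealPatV r m w H (Pi.single p 1) = idealPat r m w H p := by
  rw [idealPatV, Fintype.sum_eq_single p]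
  · simp
  · intro q hq; simp [Pi.single_eq_of_ne hq]

lemma datV_single (w : ℕ) (p : Fin (w + 2)) :
    idealDatV w (Pi.single p 1) = idealDat w p := by
  rw [idealDatV, Fintype.sum_eq_single p]
  · simp
  · intro q hq; simp [Pi.single_eq_of_ne hq]

lemma dat_boundary (w : ℕ) (p : Fin (w + 2)) (h : ¬(1 ≤ (p : ℕ) ∧ (p : ℕ) ≤ w)) :
    idealDat w p = 0 ∨ idealDat w p = fun _ => 1 := by
  have hp := p.isLt
  rcases Nat.lt_or_ge (p : ℕ) 1 with h0 | h1
  · right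
    funext j
    simp only [idealDat]
    rw [if_pos (by omega)]
  · left
    funext j
    have hj := j.isLt
    simp only [idealDat]
    rw [if_neg (by omega)]
    rfl

/-- An interior flag pattern has two distinct nonzero coordinates, so it can't equal a
vector of Hamming weight ≤ 1. -/
lemma pat_interior_not_small (m w : ℕ) (H : Matrix (Fin m) (Fin w) (ZMod 2))
    (hnz : ∀ j : Fin w, (fun i => H i j) ≠ 0) (p : Fin (w + 2))
    (ef : Fin 3 × Fin m → ZMod 2) (hef : hammingNorm ef ≤ 1)
    (h : idealPat 3 m w H p = ef) : ¬(1 ≤ (p : ℕ) ∧ (p : ℕ) ≤ w) := by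
  intro hp
  rw [idealPat, dif_pos hp] at h
  set c : Fin w := ⟨(p : ℕ) - 1, by omega⟩
  obtain ⟨i, hi⟩ := Function.ne_iff.mp (hnz c)
  simp only [Pi.zero_apply] at hi
  have h0 : ef (0, i) ≠ 0 := by rw [← h]; exact hi
  have h1 : ef (1, i) ≠ 0 := by rw [← h]; exact hi
  rcases norm_le_one_cases ef hef with h' | ⟨q, h'⟩
  · exact h0 (by rw [h']; rfl)
  · subst h'
    have e0 : ((0 : Fin 3), i) = q := by
      by_contra hne; exact h0 (Pi.single_eq_of_ne hne 1)
    have e1 : ((1 : Fin 3), i) = q := by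
      by_contra hne; exact h1 (Pi.single_eq_of_ne hne 1)
    rw [← e0] at e1
    have hfst : (1 : Fin 3) = 0 := congrArg Prod.fst e1
    exact absurd hfst (by decide)

/-- with `H` an `m × w` matrix over `ZMod 2` all of whose columns are nonzero
and pairwise distinct, and `F` its 3-fold stack, any two error configurations of total
weight at most 1 producing the same observed flag pattern propagate to the data
identically up to the full stabilizer (the all-ones vector). -/
theorem ideal_distance_three_flag_gadget (m w : ℕ)
    (H : Matrix (Fin m) (Fin w) (ZMod 2))
    (hnz : ∀ j : Fin w, (fun i => H i j) ≠ 0)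
    (hdist : ∀ j₁ j₂ : Fin w, j₁ ≠ j₂ → (fun i => H i j₁) ≠ (fun i => H i j₂))
    (e₁s e₂s : Fin (w + 2) → ZMod 2) (e₁f e₂f : Fin 3 × Fin m → ZMod 2)
    (h₁ : hammingNorm e₁s + hammingNorm e₁f ≤ 1)
    (h₂ : hammingNorm e₂s + hammingNorm e₂f ≤ 1)
    (hsame : idealPatV 3 m w H e₁s + e₁f = idealPatV 3 m w H e₂s + e₂f) :
    idealDatV w e₁s + idealDatV w e₂s = 0 ∨
      idealDatV w e₁s + idealDatV w e₂s = fun _ => 1 := by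
  rcases norm_le_one_cases e₁s (le_trans (Nat.le_add_right _ _) h₁) with hs1 | ⟨p, hs1⟩ <;>
    rcases norm_le_one_cases e₂s (le_trans (Nat.le_add_right _ _) h₂) with hs2 | ⟨q, hs2⟩ <;>
    subst hs1 <;> subst hs2
  · left
    rw [datV_zero]; simp
  · -- e₁s = 0, e₂s = single q
    have hf2 : e₂f = 0 := by
      have := norm_single q
      rw [← hammingNorm_eq_zero]; omega
    subst hf2
    rw [patV_zero, patV_single] at hsame
    simp only [zero_add, add_zero] at hsame
    have hb := pat_interior_not_small m w H hnz q e₁f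
      (le_trans (Nat.le_add_left _ _) h₁) hsame.symm
    rw [datV_zero, datV_single, zero_add]
    exact dat_boundary w q hb
  · -- symmetric
    have hf1 : e₁f = 0 := by
      have := norm_single p
      rw [← hammingNorm_eq_zero]; omega
    subst hf1
    rw [patV_zero, patV_single] at hsame
    simp only [zero_add, add_zero] at hsame
    have hb := pat_interior_not_small m w H hnz p e₂f
      (le_trans (Nat.le_add_left _ _) h₂) hsame
    rw [datV_zero, datV_single, add_zero]
    exact dat_boundary w p hb
  · -- both singles
    have hf1 : e₁f = 0 := by
      have := norm_single p
      rw [← hammingNorm_eq_zero]; omega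
    have hf2 : e₂f = 0 := by
      have := norm_single q
      rw [← hammingNorm_eq_zero]; omega
    subst hf1; subst hf2
    rw [patV_single, patV_single, add_zero, add_zero] at hsame
    rw [datV_single, datV_single]
    by_cases hp : 1 ≤ (p : ℕ) ∧ (p : ℕ) ≤ w
    · by_cases hq : 1 ≤ (q : ℕ) ∧ (q : ℕ) ≤ w
      · -- both interior: columns equal, so p = q
        rw [idealPat, idealPat, dif_pos hp, dif_pos hq] at hsame
        have hcol : (fun i => H i ⟨(p : ℕ) - 1, by omega⟩) =
            (fun i => H i ⟨(q : ℕ) - 1, by omega⟩) := by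
          funext i
          exact congrFun hsame ((0 : Fin 3), i)
        have hpq : p = q := by
          by_contra hne
          have : (⟨(p : ℕ) - 1, by omega⟩ : Fin w) ≠ ⟨(q : ℕ) - 1, by omega⟩ := by
            intro h
            apply hne
            have := congrArg Fin.val h
            simp only at this
            exact Fin.ext (by omega)
          exact hdist _ _ this hcol
        subst hpq
        left
        funext j
        simp only [Pi.add_apply, Pi.zero_apply]
        have : ∀ x : ZMod 2, x + x = 0 := by decide
        exact this _
      · -- p interior, q boundary: contradiction
        exfalso
        have : idealPat 3 m w H q = 0 := by rw [idealPat, dif_neg hq]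
        rw [this] at hsame
        exact pat_interior_not_small m w H hnz p 0 (by simp) hsame hp
    · by_cases hq : 1 ≤ (q : ℕ) ∧ (q : ℕ) ≤ w
      · exfalso
        have : idealPat 3 m w H p = 0 := by rw [idealPat, dif_neg hp]
        rw [this] at hsame
        exact pat_interior_not_small m w H hnz q 0 (by simp) hsame.symm hq
      · -- both boundary
        rcases dat_boundary w p hp with h1' | h1' <;>
          rcases dat_boundary w q hq with h2' | h2' <;> rw [h1', h2']
        · left; simp
        · right; funext j; simp
        · right; funext j; simp
        · left; funext j
          simp only [Pi.add_apply, Pi.zero_apply]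
          decide
end

section
/- Let t ≥ 1, let H be an m × w matrix over ZMod 2 with H.mulVec v ≠ 0 for every nonzero v : Fin w → ZMod 2 with wt(v) ≤ 2t (a parity-check matrix of distance at least 2t+1), and let F be the (2t+1)-fold stack of H. In the ideal flagged extraction circuit for a weight-(w+1) stabilizer with flag matrix F, any two error configurations (e₁ₛ, e₁f) and (e₂ₛ, e₂f), each of total weight at most t, that produce the same observed flag pattern satisfy: the restrictions of e₁ₛ and e₂ₛ to the interior locations 1, …, w coincide, and consequently dat(e₁ₛ) + dat(e₂ₛ) ∈ {0, 𝟙}; that is, the two errors propagate to the data identically up to the full stabilizer. -/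
lemma myWt_add_le {n : Type*} [Fintype n] (x y : n → ZMod 2) :
    hammingNorm (x + y) ≤ hammingNorm x + hammingNorm y := by
  calc hammingNorm (x + y) = hammingDist (x + y) 0 := (hammingDist_zero_right _).symm
    _ ≤ hammingDist (x + y) y + hammingDist y 0 := hammingDist_triangle _ _ _
    _ = hammingNorm x + hammingNorm y := by
        rw [hammingDist_eq_hammingNorm, hammingDist_zero_right]; simp
        rw [show -x = x from by funext i; rw [Pi.neg_apply]; generalize x i = a; revert a; decide]

lemma myWt_comp_le {a b : Type*} [Fintype a] [Fintype b] [DecidableEq b]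
    (f : a → b) (hf : Function.Injective f) (e : b → ZMod 2) :
    (hammingNorm fun j => e (f j)) ≤ hammingNorm e := by
  unfold hammingNorm
  apply Finset.card_le_card_of_injOn f
  · intro j hj
    simp only [Finset.mem_filter, Finset.mem_univ, true_and] at hj ⊢
    simpa using hj
  · exact hf.injOn

lemma patV_apply (r m w : ℕ) (H : Matrix (Fin m) (Fin w) (ZMod 2))
    (e : Fin (w + 2) → ZMod 2) (q : Fin r × Fin m) :
    idealPatV r m w H e q = ∑ j : Fin w, e j.castSucc.succ * H q.2 j := by
  unfold idealPatV
  rw [Finset.sum_apply, Fin.sum_univ_succ, Fin.sum_univ_castSucc]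
  have h0 : idealPat r m w H 0 = 0 := by
    unfold idealPat; rw [dif_neg]; simp
  have hl : idealPat r m w H (Fin.last w).succ = 0 := by
    unfold idealPat; rw [dif_neg]; simp [Fin.last]
  rw [h0, hl]
  simp only [Pi.smul_apply, Pi.zero_apply, smul_zero, zero_add, add_zero, smul_eq_mul,
    mul_zero]
  apply Finset.sum_congr rfl
  intro j _
  have hc : 1 ≤ ((j.castSucc.succ : Fin (w + 2)) : ℕ) ∧ ((j.castSucc.succ : Fin (w + 2)) : ℕ) ≤ w := by
    simp [Fin.castSucc]
  unfold idealPat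
  rw [dif_pos hc]
  congr 1

lemma datV_apply (w : ℕ) (e : Fin (w + 2) → ZMod 2) (k : Fin (w + 1)) :
    idealDatV w e k = e 0 + ∑ j : Fin w, e j.castSucc.succ * idealDat w j.castSucc.succ k := by
  unfold idealDatV
  rw [Finset.sum_apply, Fin.sum_univ_succ, Fin.sum_univ_castSucc]
  have hl : idealDat w (Fin.last (w + 1)) k = 0 := by
    unfold idealDat
    rw [if_neg]
    simp [Fin.last]; omega
  have h0 : idealDat w 0 k = 1 := by
    unfold idealDat; rw [if_pos]; simp
  simp [hl, h0]

/-- with `H` a parity-check matrix of distance at least `2t+1` and `F` its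
`(2t+1)`-fold stack, any two error configurations of total weight at most `t` producing
the same observed flag pattern agree on the interior locations `1, …, w`, and consequently
propagate to the data identically up to the full stabilizer (the all-ones vector). -/
theorem ideal_distance_d_flag_gadget (t m w : ℕ) (ht : 1 ≤ t)
    (H : Matrix (Fin m) (Fin w) (ZMod 2))
    (hH : ∀ v : Fin w → ZMod 2, v ≠ 0 → hammingNorm v ≤ 2 * t → H.mulVec v ≠ 0)
    (e₁s e₂s : Fin (w + 2) → ZMod 2) (e₁f e₂f : Fin (2 * t + 1) × Fin m → ZMod 2)
    (h₁ : hammingNorm e₁s + hammingNorm e₁f ≤ t)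
    (h₂ : hammingNorm e₂s + hammingNorm e₂f ≤ t)
    (hsame : idealPatV (2 * t + 1) m w H e₁s + e₁f
           = idealPatV (2 * t + 1) m w H e₂s + e₂f) :
    (∀ p : Fin (w + 2), 1 ≤ (p : ℕ) → (p : ℕ) ≤ w → e₁s p = e₂s p) ∧
      (idealDatV w e₁s + idealDatV w e₂s = 0 ∨
        idealDatV w e₁s + idealDatV w e₂s = fun _ => 1) := by
  classical
  set v : Fin w → ZMod 2 := fun j => e₁s j.castSucc.succ + e₂s j.castSucc.succ with hvdef
  have z2 : ∀ a b c d : ZMod 2, a + c = b + d → a + b = c + d := by decide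
  have z0 : ∀ a b : ZMod 2, a + b = 0 → a = b := by decide
  have zne : ∀ a b : ZMod 2, a + b ≠ 0 → a ≠ 0 ∨ b ≠ 0 := by decide
  have hinj : Function.Injective (fun j : Fin w => (j.castSucc.succ : Fin (w + 2))) :=
    (Fin.succ_injective _).comp (Fin.castSucc_injective _)
  have key : ∀ q : Fin (2 * t + 1) × Fin m, H.mulVec v q.2 = e₁f q + e₂f q := by
    intro q
    have h := z2 _ _ _ _ (congrFun hsame q)
    rw [patV_apply, patV_apply] at h
    rw [← h, Matrix.mulVec, dotProduct, ← Finset.sum_add_distrib]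
    apply Finset.sum_congr rfl
    intro j _
    simp only [hvdef]
    ring
  have hv0 : v = 0 := by
    by_contra hv
    have hwv : hammingNorm v ≤ 2 * t := by
      have ha : hammingNorm v ≤ (hammingNorm fun j : Fin w => e₁s j.castSucc.succ)
          + hammingNorm fun j : Fin w => e₂s j.castSucc.succ :=
        myWt_add_le _ _
      have hb := myWt_comp_le _ hinj e₁s
      have hc := myWt_comp_le _ hinj e₂s
      omega
    obtain ⟨i, hi⟩ := Function.ne_iff.mp (hH v hv hwv)
    have hi' : H.mulVec v i ≠ 0 := hi
    have hsub : ∀ b : Fin (2 * t + 1), e₁f (b, i) ≠ 0 ∨ e₂f (b, i) ≠ 0 := by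
      intro b
      apply zne
      rw [← key (b, i)]
      exact hi'
    have hcard : 2 * t + 1 ≤ hammingNorm e₁f + hammingNorm e₂f := by
      have hS : (Finset.univ.image (fun b : Fin (2 * t + 1) => (b, i))) ⊆
          (Finset.univ.filter fun q => e₁f q ≠ 0) ∪ Finset.univ.filter fun q => e₂f q ≠ 0 := by
        intro q hq
        simp only [Finset.mem_image, Finset.mem_univ, true_and] at hq
        obtain ⟨b, rfl⟩ := hq
        simp only [Finset.mem_union, Finset.mem_filter, Finset.mem_univ, true_and]
        exact hsub b
      have h1 := Finset.card_le_card hS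
      have h2 := Finset.card_union_le (Finset.univ.filter fun q => e₁f q ≠ 0) (Finset.univ.filter fun q => e₂f q ≠ 0)
      rw [Finset.card_image_of_injective _ (fun a b hab => (Prod.mk.injEq _ _ _ _ ▸ hab).1)] at h1
      simp only [Finset.card_univ, Fintype.card_fin] at h1
      unfold hammingNorm
      omega
    omega
  constructor
  · intro p hp1 hpw
    have hj : (⟨(p : ℕ) - 1, by omega⟩ : Fin w).castSucc.succ = p := by
      apply Fin.ext
      simp [Fin.castSucc]
      omega
    have := congrFun hv0 ⟨(p : ℕ) - 1, by omega⟩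
    rw [hvdef] at this
    simp only [Pi.zero_apply] at this
    rw [hj] at this
    exact z0 _ _ this
  · have hk : ∀ k, idealDatV w e₁s k + idealDatV w e₂s k = e₁s 0 + e₂s 0 := by
      intro k
      rw [datV_apply, datV_apply, add_add_add_comm, ← Finset.sum_add_distrib]
      have hz : ∀ j ∈ (Finset.univ : Finset (Fin w)),
          e₁s j.castSucc.succ * idealDat w j.castSucc.succ k
            + e₂s j.castSucc.succ * idealDat w j.castSucc.succ k = 0 := by
        intro j _
        have hj := congrFun hv0 j
        rw [hvdef] at hj
        simp only [Pi.zero_apply] at hj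
        rw [← add_mul, hj, zero_mul]
      rw [Finset.sum_eq_zero hz, add_zero]
    rcases (by decide : ∀ a : ZMod 2, a = 0 ∨ a = 1) (e₁s 0 + e₂s 0) with h | h
    · left; funext k; rw [Pi.add_apply, hk k, h]; rfl
    · right; funext k; rw [Pi.add_apply, hk k, h]
end

section
/- Let t ≥ 1, let H be an m × w matrix over ZMod 2 with H.mulVec v ≠ 0 for every nonzero v : Fin w → ZMod 2 with wt(v) ≤ 2t, and let F be the (2t+1)-fold stack of H. Then every flag pattern determines the syndrome-error locations uniquely: for every P : Fin (2t+1) × Fin m → ZMod 2 and every u₁, u₂ : Fin w → ZMod 2, if wt(P + F.mulVec u₁) + wt(u₁) ≤ t and wt(P + F.mulVec u₂) + wt(u₂) ≤ t, then u₁ = u₂. -/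
/-- for `H` of distance at least `2t+1` and `F` its `(2t+1)`-fold stack,
every flag pattern determines the syndrome-error locations uniquely: if
`wt (P + F.mulVec u₁) + wt u₁ ≤ t` and `wt (P + F.mulVec u₂) + wt u₂ ≤ t`, then `u₁ = u₂`. -/
theorem flag_pattern_determines_error (t m w : ℕ) (ht : 1 ≤ t)
    (H : Matrix (Fin m) (Fin w) (ZMod 2))
    (hH : ∀ v : Fin w → ZMod 2, v ≠ 0 → hammingNorm v ≤ 2 * t → H.mulVec v ≠ 0)
    (P : Fin (2 * t + 1) × Fin m → ZMod 2) (u₁ u₂ : Fin w → ZMod 2)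
    (h₁ : hammingNorm (P + (stackMatrix (2 * t + 1) m w H).mulVec u₁) + hammingNorm u₁ ≤ t)
    (h₂ : hammingNorm (P + (stackMatrix (2 * t + 1) m w H).mulVec u₂) + hammingNorm u₂ ≤ t) :
    u₁ = u₂ := by
  by_contra hne
  set F := stackMatrix (2 * t + 1) m w H with hF
  set v := u₁ - u₂ with hv
  have hv0 : v ≠ 0 := sub_ne_zero.mpr hne
  have hwt : hammingNorm v ≤ 2 * t := by
    calc hammingNorm v = hammingDist u₁ u₂ := by rw [hammingDist_comm, hammingDist_eq_hammingNorm, neg_add_eq_sub]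
      _ ≤ hammingDist u₁ 0 + hammingDist 0 u₂ := hammingDist_triangle _ _ _
      _ = hammingNorm u₁ + hammingNorm u₂ := by
          rw [hammingDist_zero_right, hammingDist_zero_left]
      _ ≤ 2 * t := by omega
  obtain ⟨i, hi⟩ := Function.ne_iff.mp (hH v hv0 hwt)
  have hrow : ∀ b : Fin (2 * t + 1), F.mulVec v (b, i) = H.mulVec v i := fun b => rfl
  have key : 2 * t + 1 ≤ hammingDist (F.mulVec u₁) (F.mulVec u₂) := by
    rw [hammingDist_comm, hammingDist_eq_hammingNorm, neg_add_eq_sub]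
    have hsub : F.mulVec u₁ - F.mulVec u₂ = F.mulVec v := by
      rw [hv, Matrix.mulVec_sub]
    rw [hsub]
    have hcard : (Finset.univ : Finset (Fin (2 * t + 1))).card ≤
        ({p | F.mulVec v p ≠ 0} : Finset (Fin (2 * t + 1) × Fin m)).card := by
      apply Finset.card_le_card_of_injOn (fun b => (b, i))
      · intro b _
        simp only [Finset.coe_filter, Finset.coe_univ, Set.mem_univ, Set.mem_setOf_eq, Finset.mem_filter, Finset.mem_univ, true_and]
        rw [hrow b]
        simpa using hi
      · intro a _ b _ h
        exact (Prod.mk.injEq _ _ _ _).mp h |>.1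
    simpa [hammingNorm] using hcard
  have hd1 : hammingDist (F.mulVec u₁) P = hammingNorm (P + F.mulVec u₁) := by
    rw [hammingDist_eq_hammingNorm]
    congr 1
    funext p
    simp [sub_eq_add_neg, CharTwo.neg_eq, add_comm]
  have hd2 : hammingDist P (F.mulVec u₂) = hammingNorm (P + F.mulVec u₂) := by
    rw [hammingDist_eq_hammingNorm]
    congr 1
    funext p
    simp [sub_eq_add_neg, CharTwo.neg_eq]
  have := hammingDist_triangle (F.mulVec u₁) P (F.mulVec u₂)
  omega
end

section
/- Let m ≥ 1, let K = GaloisField 2 m, let α ∈ K be a primitive element (a generator of the unit group Kˣ), and let t, w satisfy 1 ≤ 2t ≤ w ≤ 2^m − 1. Define the BCH parity-check matrix H' : Matrix (Fin (2t)) (Fin w) K by H' i j = α^(((i : ℕ)+1) · (j : ℕ)). Then for every nonzero v : Fin w → ZMod 2 with Hamming weight at most 2t, the vector H'.mulVec v̂ is nonzero, where v̂ : Fin w → K sends j to 1 if v j = 1 and to 0 otherwise. Equivalently, every 𝔽₂-linear combination of at most 2t columns of H' with coefficients not all zero is nonzero, so the binary code {v : H'.mulVec v̂ = 0} has minimum distance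 at least 2t+1. -/
/-- for `K = GaloisField 2 m`, `α` a primitive element of `K` (a generator of
the unit group `Kˣ`), and `1 ≤ 2t ≤ w ≤ 2^m − 1`, the BCH parity-check matrix
`H' i j = α^((i+1)·j)` (with `2t` rows) annihilates no nonzero binary vector of Hamming
weight at most `2t`: the binary code it defines has minimum distance at least `2t+1`. -/
theorem bch_full_parity_check_distance (m t w : ℕ) (hm : 1 ≤ m)
    (ht : 1 ≤ 2 * t) (htw : 2 * t ≤ w) (hw : w ≤ 2 ^ m - 1)
    (α : GaloisField 2 m) (u : (GaloisField 2 m)ˣ)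
    (hu : (u : GaloisField 2 m) = α)
    (hgen : ∀ x : (GaloisField 2 m)ˣ, x ∈ Subgroup.zpowers u)
    (v : Fin w → ZMod 2) (hv : v ≠ 0) (hwt : hammingNorm v ≤ 2 * t) :
    (Matrix.of fun (i : Fin (2 * t)) (j : Fin w) =>
        α ^ (((i : ℕ) + 1) * (j : ℕ))).mulVec
      (fun j => if v j = 1 then (1 : GaloisField 2 m) else 0) ≠ 0 := by
  intro h0
  have hK : Nat.card (GaloisField 2 m) = 2 ^ m := GaloisField.card 2 m (by omega)
  have hord : orderOf u = 2 ^ m - 1 := by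
    rw [orderOf_eq_card_of_forall_mem_zpowers hgen, Nat.card_units, hK]
  have hzo : ∀ a : ZMod 2, a = 0 ∨ a = 1 := by decide
  -- the support of v
  set S : Finset (Fin w) := Finset.univ.filter (fun j => v j ≠ 0) with hSdef
  have hScard : S.card = hammingNorm v := rfl
  have hs2 : S.card ≤ 2 * t := hScard ▸ hwt
  have hs1 : 1 ≤ S.card := by
    rcases Function.ne_iff.mp hv with ⟨j, hj⟩
    exact Finset.card_pos.mpr ⟨j, by simpa [hSdef] using hj⟩
  set s := S.card with hsdef
  set e : Fin s ≃ {x // x ∈ S} := S.equivFin.symm with hedef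
  set x : Fin s → GaloisField 2 m := fun k => α ^ ((e k : Fin w) : ℕ) with hxdef
  have hxu : ∀ k, x k = ((u ^ ((e k : Fin w) : ℕ) : (GaloisField 2 m)ˣ) :
      GaloisField 2 m) := by
    intro k
    rw [hxdef, ← hu, Units.val_pow_eq_pow_val]
  have hxinj : Function.Injective x := by
    intro k k' h
    rw [hxu, hxu] at h
    have h2 : u ^ ((e k : Fin w) : ℕ) = u ^ ((e k' : Fin w) : ℕ) := Units.ext h
    rw [pow_eq_pow_iff_modEq, hord] at h2
    have hlt : ∀ k0 : Fin s, ((e k0 : Fin w) : ℕ) < 2 ^ m - 1 :=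
      fun k0 => lt_of_lt_of_le (e k0).1.2 hw
    have heq : ((e k : Fin w) : ℕ) = ((e k' : Fin w) : ℕ) := by
      have h3 := h2
      unfold Nat.ModEq at h3
      rwa [Nat.mod_eq_of_lt (hlt k), Nat.mod_eq_of_lt (hlt k')] at h3
    exact e.injective (Subtype.ext (Fin.ext heq))
  have hxne : ∀ k, x k ≠ 0 := fun k => by rw [hxu]; exact Units.ne_zero _
  -- row sums vanish
  have hrow : ∀ i : Fin s, ∑ k : Fin s, x k ^ ((i : ℕ) + 1) = 0 := by
    intro i
    have hi2t : (i : ℕ) < 2 * t := lt_of_lt_of_le i.2 hs2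
    have h1 := congr_fun h0 ⟨(i : ℕ), hi2t⟩
    simp only [Matrix.mulVec, Matrix.of_apply, Pi.zero_apply,
      dotProduct] at h1
    have hsum : (∑ j : Fin w, α ^ (((i : ℕ) + 1) * (j : ℕ)) *
        (if v j = 1 then (1 : GaloisField 2 m) else 0)) =
        ∑ k : Fin s, x k ^ ((i : ℕ) + 1) := by
      calc (∑ j : Fin w, α ^ (((i : ℕ) + 1) * (j : ℕ)) *
            (if v j = 1 then (1 : GaloisField 2 m) else 0))
          = ∑ j ∈ S, α ^ (((i : ℕ) + 1) * (j : ℕ)) := by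
            rw [hSdef, Finset.sum_filter]
            refine Finset.sum_congr rfl fun j _ => ?_
            rcases hzo (v j) with h | h <;> simp [h]
        _ = ∑ a : {x // x ∈ S}, α ^ (((i : ℕ) + 1) * ((a : Fin w) : ℕ)) :=
            (Finset.sum_attach S _).symm
        _ = ∑ k : Fin s, α ^ (((i : ℕ) + 1) * ((e k : Fin w) : ℕ)) :=
            (Equiv.sum_comp e _).symm
        _ = ∑ k : Fin s, x k ^ ((i : ℕ) + 1) := by
            refine Finset.sum_congr rfl fun k _ => ?_
            rw [hxdef, mul_comm, pow_mul]
    rw [← hsum]; exact h1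
  have hx0 : x = 0 := by
    refine Matrix.eq_zero_of_forall_pow_sum_mul_pow_eq_zero hxinj fun i => ?_
    rw [← hrow i]
    refine Finset.sum_congr rfl fun k _ => ?_
    rw [pow_succ, mul_comm]
  exact hxne ⟨0, hs1⟩ (congr_fun hx0 ⟨0, hs1⟩)
end

section
/- Let m ≥ 1, let K = GaloisField 2 m, let α ∈ K be a primitive element (a generator of the unit group Kˣ), and let t, w satisfy 1 ≤ 2t ≤ w ≤ 2^m − 1. Define the reduced BCH parity-check matrix H : Matrix (Fin t) (Fin w) K by H i j = α^((2·(i : ℕ)+1) · (j : ℕ)) (only the odd-power rows of the full BCH matrix). Then H has the same column-independence property as the full matrix: for every nonzero v : Fin w → ZMod 2 with Hamming weight at most 2t, the vector H.mulVec v̂ is nonzero, where v̂ : Fin w → K sends j to 1 if v j = 1 and to 0 otherwise. Hence the binary code {v : H.mulVec v̂ = 0} has minimum distance at least 2t+1, with only t rows over K. -/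
/-- for `K = GaloisField 2 m`, `α` a primitive element of `K` (a generator of
the unit group `Kˣ`), and `1 ≤ 2t ≤ w ≤ 2^m − 1`, the reduced BCH parity-check matrix
`H i j = α^((2i+1)·j)` (only the odd-power rows, so `t` rows over `K`) annihilates no
nonzero binary vector of Hamming weight at most `2t`: the binary code it defines has
minimum distance at least `2t+1`. -/
theorem bch_reduced_parity_check_distance (m t w : ℕ) (hm : 1 ≤ m)
    (ht : 1 ≤ 2 * t) (htw : 2 * t ≤ w) (hw : w ≤ 2 ^ m - 1)
    (α : GaloisField 2 m) (u : (GaloisField 2 m)ˣ)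
    (hu : (u : GaloisField 2 m) = α)
    (hgen : ∀ x : (GaloisField 2 m)ˣ, x ∈ Subgroup.zpowers u)
    (v : Fin w → ZMod 2) (hv : v ≠ 0) (hwt : hammingNorm v ≤ 2 * t) :
    (Matrix.of fun (i : Fin t) (j : Fin w) =>
        α ^ ((2 * (i : ℕ) + 1) * (j : ℕ))).mulVec
      (fun j => if v j = 1 then (1 : GaloisField 2 m) else 0) ≠ 0 := by
  intro h0
  classical
  set vb : Fin w → GaloisField 2 m := fun j => if v j = 1 then 1 else 0 with hvb
  letI : Fintype (GaloisField 2 m) := Fintype.ofFinite _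
  have hK : Fintype.card (GaloisField 2 m) = 2 ^ m := by
    rw [← Nat.card_eq_fintype_card]; exact GaloisField.card 2 m (by omega)
  have hord : orderOf u = 2 ^ m - 1 := by
    rw [orderOf_eq_card_of_forall_mem_zpowers hgen, Nat.card_units, Nat.card_eq_fintype_card, hK]
  have hinj : ∀ a b : Fin w, α ^ (a : ℕ) = α ^ (b : ℕ) → a = b := by
    intro a b hab
    rw [← hu] at hab
    have hub : u ^ (a : ℕ) = u ^ (b : ℕ) := Units.ext (by push_cast; exact hab)
    exact Fin.ext <| pow_injOn_Iio_orderOf (x := u)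
      (by simp only [Set.mem_Iio, hord]; omega) (by simp only [Set.mem_Iio, hord]; omega) hub
  have hα : α ≠ 0 := by rw [← hu]; exact Units.ne_zero u
  have hrow : ∀ i : Fin t,
      ∑ j : Fin w, α ^ ((2 * (i : ℕ) + 1) * (j : ℕ)) * vb j = 0 := by
    intro i
    have := congrFun h0 i
    simpa [Matrix.mulVec, dotProduct] using this
  have hvb2 : ∀ j, vb j ^ 2 = vb j := by
    intro j; simp only [hvb]; split <;> norm_num
  have key : ∀ k, 1 ≤ k → k ≤ 2 * t →
      ∑ j : Fin w, α ^ (k * (j : ℕ)) * vb j = 0 := by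
    intro k
    induction k using Nat.strong_induction_on with
    | _ k ih =>
      intro h1 h2
      rcases Nat.even_or_odd k with ⟨k', rfl⟩ | ⟨i, rfl⟩
      · have hk' := ih k' (by omega) (by omega) (by omega)
        have hsq : (∑ j : Fin w, α ^ (k' * (j : ℕ)) * vb j) ^ 2
            = ∑ j : Fin w, α ^ ((k' + k') * (j : ℕ)) * vb j := by
          rw [sum_pow_char]
          refine Finset.sum_congr rfl fun j _ => ?_
          rw [mul_pow, hvb2, ← pow_mul]
          ring_nf
        rw [← hsq, hk']
        ring
      · have hi : i < t := by omega
        simpa using hrow ⟨i, hi⟩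
  set S : Finset (Fin w) := Finset.univ.filter (fun j => v j = 1) with hS
  have hne : ∀ a : ZMod 2, a ≠ 0 ↔ a = 1 := by decide
  have hcard : S.card ≤ 2 * t := by
    have : hammingNorm v = S.card := by
      unfold hammingNorm
      exact Finset.card_bij (fun a _ => a) (fun a ha => by
        simp only [hS, Finset.mem_filter, Finset.mem_univ, true_and]
        simp only [Finset.mem_filter] at ha
        exact (hne _).mp ha.2) (fun _ _ _ _ h => h)
        (fun b hb => ⟨b, by
          simp only [hS, Finset.mem_filter, Finset.mem_univ, true_and] at hb
          simp [hb], rfl⟩)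
    omega
  have hSne : S.Nonempty := by
    rcases Function.ne_iff.mp hv with ⟨j, hj⟩
    exact ⟨j, by simp [hS, (hne _).mp hj]⟩
  have hspos : 0 < S.card := Finset.card_pos.mpr hSne
  have keyS : ∀ k, 1 ≤ k → k ≤ 2 * t → ∑ j ∈ S, α ^ (k * (j : ℕ)) = 0 := by
    intro k h1 h2
    rw [← key k h1 h2]
    rw [Finset.sum_filter]
    refine Finset.sum_congr rfl fun j _ => ?_
    simp only [hvb]
    split <;> simp
  -- Vandermonde setup
  set s := S.card with hsdef
  let e : Fin s ≃ {x // x ∈ S} := (S.equivFin).symm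
  let x : Fin s → GaloisField 2 m := fun i => α ^ ((e i : Fin w) : ℕ)
  have hxinj : Function.Injective x := by
    intro a b hab
    have := hinj _ _ hab
    exact e.injective (Subtype.ext this)
  have hxne : ∀ i, x i ≠ 0 := fun i => pow_ne_zero _ hα
  let M : Matrix (Fin s) (Fin s) (GaloisField 2 m) :=
    Matrix.of fun i j => x j ^ ((i : ℕ) + 1)
  have hMdet : M.det ≠ 0 := by
    have hT : M.transpose = Matrix.diagonal x * Matrix.vandermonde x := by
      ext i j
      simp [M, Matrix.vandermonde, Matrix.mul_apply, Matrix.diagonal, pow_succ, mul_comm]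
    have : M.det = (∏ i, x i) * (Matrix.vandermonde x).det := by
      rw [← Matrix.det_transpose, hT, Matrix.det_mul, Matrix.det_diagonal]
    rw [this]
    exact mul_ne_zero (Finset.prod_ne_zero_iff.mpr fun i _ => hxne i)
      (Matrix.det_vandermonde_ne_zero_iff.mpr hxinj)
  have hMv : M.mulVec (fun _ => 1) = 0 := by
    funext i
    have hsum : ∑ j : Fin s, x j ^ ((i : ℕ) + 1) = ∑ j ∈ S, α ^ (((i : ℕ) + 1) * (j : ℕ)) := by
      rw [← Finset.sum_coe_sort S (fun j => α ^ (((i : ℕ) + 1) * (j : ℕ))),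
        ← e.sum_comp (fun j => α ^ (((i : ℕ) + 1) * ((j : Fin w) : ℕ)))]
      refine Finset.sum_congr rfl fun j _ => ?_
      rw [← pow_mul, mul_comm]
    simp only [Matrix.mulVec, dotProduct, mul_one, M, Matrix.of_apply, Pi.zero_apply]
    rw [hsum]
    exact keyS _ (by omega) (by omega)
  have := Matrix.eq_zero_of_mulVec_eq_zero hMdet hMv
  have h1 : (1 : GaloisField 2 m) = 0 := congrFun this ⟨0, hspos⟩
  exact one_ne_zero h1
end

section
/- Let a, b : Fin m → ZMod 2 both be nonzero vectors with val(b) ≤ val(a). Then for every k ∈ ℕ, the intermediate vector a + [a + b][k] is nonzero. (In particular, none of the columns arising when unfolding the transition from column a to column b is the zero vector.) -/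
/-- Binary value of a vector over `ZMod 2`, with higher indices more significant. -/
def binVal (m : ℕ) (v : Fin m → ZMod 2) : ℕ :=
  ∑ i ∈ Finset.univ.filter (fun i : Fin m => v i = 1), 2 ^ (i : ℕ)

/-- `truncFirst m v k` is the indicator vector of the `k` smallest indices `i` with
`v i ≠ 0` (of all of them if `k` exceeds the Hamming weight of `v`). -/
def truncFirst (m : ℕ) (v : Fin m → ZMod 2) (k : ℕ) : Fin m → ZMod 2 :=
  fun i =>
    if v i ≠ 0 ∧ (Finset.univ.filter fun j : Fin m => v j ≠ 0 ∧ j < i).card < k then 1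
    else 0

lemma zmod2_cases (x : ZMod 2) : x = 0 ∨ x = 1 := by revert x; decide

lemma sum_range_two_pow (n : ℕ) : ∑ j ∈ Finset.range n, 2 ^ j < 2 ^ n := by
  induction n with
  | zero => simp
  | succ n ih => rw [Finset.sum_range_succ, pow_succ]; omega

lemma sum_pow_lt {m n : ℕ} (T : Finset (Fin m)) (hT : ∀ i ∈ T, (i : ℕ) < n) :
    ∑ i ∈ T, 2 ^ (i : ℕ) < 2 ^ n := by
  calc ∑ i ∈ T, 2 ^ (i : ℕ)
      = ∑ j ∈ T.image (fun i : Fin m => (i : ℕ)), 2 ^ j := by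
        rw [Finset.sum_image (fun a _ b _ h => Fin.val_injective h)]
    _ ≤ ∑ j ∈ Finset.range n, 2 ^ j := Finset.sum_le_sum_of_subset (by
        intro j hj
        simp only [Finset.mem_image] at hj
        obtain ⟨i, hi, rfl⟩ := hj
        exact Finset.mem_range.2 (hT i hi))
    _ < 2 ^ n := sum_range_two_pow n

/-- if `a` and `b` are nonzero vectors over `ZMod 2` with
`val b ≤ val a`, then for every `k` the intermediate unfolding vector
`a + [a + b][k]` is nonzero. -/
theorem unfolding_intermediate_columns_nonzero (m : ℕ) (a b : Fin m → ZMod 2)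
    (ha : a ≠ 0) (hb : b ≠ 0) (hval : binVal m b ≤ binVal m a) (k : ℕ) :
    a + truncFirst m (a + b) k ≠ 0 := by
  intro h
  set c := a + b with hc
  set t := truncFirst m c k with ht
  have heq : ∀ i, a i = t i := by
    intro i
    have h2 : a i + t i = 0 := congrFun h i
    rcases zmod2_cases (a i) with h3 | h3 <;> rcases zmod2_cases (t i) with h4 | h4 <;>
      simp [h3, h4] at h2 ⊢
  -- b i = a i + c i
  have hbi : ∀ i, b i = a i + c i := by
    intro i
    rcases zmod2_cases (a i) with h3 | h3 <;> rcases zmod2_cases (b i) with h4 | h4 <;>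
      simp [hc, h3, h4] <;> decide
  by_cases hall : ∀ i, c i ≠ 0 → t i = 1
  · -- then t = c pointwise, so a = c, so b = 0
    apply hb
    funext i
    by_cases hci : c i = 0
    · have hti : t i = 0 := by
        rw [ht]; unfold truncFirst; rw [if_neg]; rintro ⟨h1, _⟩; exact h1 hci
      have := hbi i
      rw [this, heq i, hti, hci]; rfl
    · have hti : t i = 1 := hall i hci
      have hc1 : c i = 1 := (zmod2_cases (c i)).resolve_left hci
      have := hbi i
      rw [this, heq i, hti, hc1]; rfl
  · push_neg at hall
    obtain ⟨j, hcj, htj⟩ := hall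
    -- t j = 0, and the card condition fails at j
    have hcard : ¬ (Finset.univ.filter fun j' : Fin m => c j' ≠ 0 ∧ j' < j).card < k := by
      intro hlt
      exact htj (by rw [ht]; unfold truncFirst; rw [if_pos ⟨hcj, hlt⟩])
    -- let M be the largest index with c M ≠ 0
    have hne : (Finset.univ.filter fun i : Fin m => c i ≠ 0).Nonempty :=
      ⟨j, by simp [hcj]⟩
    set M := (Finset.univ.filter fun i : Fin m => c i ≠ 0).max' hne with hM
    have hcM : c M ≠ 0 := by
      have := (Finset.univ.filter fun i : Fin m => c i ≠ 0).max'_mem hne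
      simpa using this
    have hjM : j ≤ M := by
      apply Finset.le_max'; simp [hcj]
    -- t M = 0
    have htM : t M = 0 := by
      rw [ht]; unfold truncFirst; rw [if_neg]
      rintro ⟨_, hlt⟩
      apply hcard
      refine lt_of_le_of_lt ?_ hlt
      apply Finset.card_le_card
      intro i hi
      simp only [Finset.mem_filter, Finset.mem_univ, true_and] at hi ⊢
      exact ⟨hi.1, lt_of_lt_of_le hi.2 hjM⟩
    -- a M = 0, and a i = 0 for i > M
    have haM : a M = 0 := by rw [heq M, htM]
    have hgt : ∀ i, M < i → a i = 0 ∧ c i = 0 := by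
      intro i hMi
      have hci : c i = 0 := by
        by_contra hci
        have : i ≤ M := Finset.le_max' _ i (by simp [hci])
        exact absurd hMi (not_lt.2 this)
      have hti : t i = 0 := by
        rw [ht]; unfold truncFirst; rw [if_neg]; rintro ⟨h1, _⟩; exact h1 hci
      exact ⟨by rw [heq i, hti], hci⟩
    -- b M = 1
    have hbM : b M = 1 := by
      have := hbi M
      have hc1 : c M = 1 := (zmod2_cases (c M)).resolve_left hcM
      rw [this, haM, hc1, zero_add]
    -- binVal a < 2^M
    have hlta : binVal m a < 2 ^ (M : ℕ) := by
      apply sum_pow_lt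
      intro i hi
      simp only [Finset.mem_filter, Finset.mem_univ, true_and] at hi
      by_contra hle
      push_neg at hle
      have hMi : M ≤ i := by exact_mod_cast hle
      rcases eq_or_lt_of_le hMi with heq' | hlt'
      · rw [← heq'] at hi; rw [haM] at hi; exact absurd hi (by decide)
      · have := (hgt i hlt').1; rw [this] at hi; exact absurd hi (by decide)
    -- binVal b ≥ 2^M
    have hgeb : 2 ^ (M : ℕ) ≤ binVal m b := by
      apply Finset.single_le_sum (f := fun i : Fin m => 2 ^ (i : ℕ))
      · intro i _; positivity
      · simp [hbM]
    omega
end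

section
/- Let H be an m × w matrix over ZMod 2 none of whose columns is the zero vector. Then there is a reordering of the columns of H for which all unfolding intermediate columns are nonzero: namely, for any enumeration C₁, …, C_w of the columns of H with val(C₁) ≥ val(C₂) ≥ ⋯ ≥ val(C_w) (columns sorted in nonincreasing order of binary value), one has Cᵢ + [Cᵢ + Cᵢ₊₁][k] ≠ 0 for every 1 ≤ i < w and every k ∈ ℕ. -/
lemma zmod2_add_eq_zero {x y : ZMod 2} (h : x + y = 0) : x = y := by revert x y; decide

lemma sum_two_pow_lt (n : ℕ) : ∑ t ∈ Finset.range n, 2^t < 2^n := by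
  induction n with
  | zero => simp
  | succ n ih => rw [Finset.sum_range_succ, pow_succ]; omega

lemma binVal_lt {m : ℕ} (u v : Fin m → ZMod 2) (j : Fin m)
    (hu : u j = 0) (hv : v j = 1) (h : ∀ i, j < i → u i = v i) :
    binVal m u < binVal m v := by
  have split : ∀ w : Fin m → ZMod 2,
      binVal m w = (∑ i ∈ Finset.univ.filter (fun i => w i = 1 ∧ j < i), 2^(i:ℕ))
        + ∑ i ∈ Finset.univ.filter (fun i => w i = 1 ∧ ¬ j < i), 2^(i:ℕ) := by
    intro w
    rw [binVal, ← Finset.sum_union]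
    · congr 1
      ext i
      simp only [Finset.mem_filter, Finset.mem_union, Finset.mem_univ, true_and]
      tauto
    · rw [Finset.disjoint_left]
      intro i h1 h2
      simp only [Finset.mem_filter] at h1 h2
      tauto
  have hhi : Finset.univ.filter (fun i => u i = 1 ∧ j < i)
      = Finset.univ.filter (fun i => v i = 1 ∧ j < i) := by
    ext i
    simp only [Finset.mem_filter, Finset.mem_univ, true_and]
    constructor
    · rintro ⟨h1, h2⟩; exact ⟨(h i h2) ▸ h1, h2⟩
    · rintro ⟨h1, h2⟩; exact ⟨(h i h2) ▸ h1, h2⟩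
  have hlou : (∑ i ∈ Finset.univ.filter (fun i => u i = 1 ∧ ¬ j < i), 2^(i:ℕ)) < 2^(j:ℕ) := by
    calc (∑ i ∈ Finset.univ.filter (fun i => u i = 1 ∧ ¬ j < i), 2^(i:ℕ))
        = ∑ t ∈ (Finset.univ.filter (fun i => u i = 1 ∧ ¬ j < i)).image Fin.val, 2^t := by
          rw [Finset.sum_image (by intro x _ y _ hxy; exact Fin.val_injective hxy)]
      _ ≤ ∑ t ∈ Finset.range (j:ℕ), 2^t := by
          apply Finset.sum_le_sum_of_subset
          intro t ht
          simp only [Finset.mem_image, Finset.mem_filter, Finset.mem_univ, true_and] at ht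
          obtain ⟨i, ⟨h1, h2⟩, rfl⟩ := ht
          have : i ≠ j := by rintro rfl; rw [hu] at h1; exact one_ne_zero h1.symm
          have : i < j := lt_of_le_of_ne (not_lt.mp h2) this
          simpa [Finset.mem_range] using this
      _ < 2^(j:ℕ) := sum_two_pow_lt _
  have hlov : 2^(j:ℕ) ≤ ∑ i ∈ Finset.univ.filter (fun i => v i = 1 ∧ ¬ j < i), 2^(i:ℕ) := by
    apply Finset.single_le_sum (f := fun i : Fin m => 2^(i:ℕ)) (fun _ _ => Nat.zero_le _)
    simp [hv]
  rw [split u, split v, hhi]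
  omega

lemma key_lemma {m : ℕ} (a b : Fin m → ZMod 2) (ha : a ≠ 0) (hb : b ≠ 0)
    (hle : binVal m b ≤ binVal m a) (k : ℕ) :
    a + truncFirst m (a + b) k ≠ 0 := by
  by_cases hab : a = b
  · subst hab
    have ht : truncFirst m (a + a) k = 0 := by
      funext i
      simp [truncFirst, CharTwo.add_self_eq_zero]
    rw [ht, add_zero]; exact ha
  · set d := a + b with hd
    have hdne : d ≠ 0 := by
      intro h
      apply hab
      funext i
      exact zmod2_add_eq_zero (congrFun h i)
    obtain ⟨i₀, hi₀⟩ := Function.ne_iff.mp hdne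
    have hS : (Finset.univ.filter (fun i => d i ≠ 0)).Nonempty :=
      ⟨i₀, by simpa using hi₀⟩
    set S := Finset.univ.filter (fun i : Fin m => d i ≠ 0) with hSdef
    set j := S.max' hS with hj
    have hjS : d j ≠ 0 := (Finset.mem_filter.mp (S.max'_mem hS)).2
    have habove : ∀ i, j < i → a i = b i := by
      intro i hji
      by_contra hne
      have : d i ≠ 0 := by
        intro h0
        exact hne (zmod2_add_eq_zero (by simpa [hd] using h0))
      have : i ∈ S := Finset.mem_filter.mpr ⟨Finset.mem_univ _, this⟩
      exact absurd (S.le_max' i this) (not_le.mpr hji)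
    have haj : a j = 1 := by
      by_contra hne
      have haj0 : a j = 0 := by
        rcases (by decide : ∀ x : ZMod 2, x = 0 ∨ x = 1) (a j) with h | h
        · exact h
        · exact absurd h hne
      have hbj : b j = 1 := by
        apply zmod2_ne_zero
        intro h0
        apply hjS
        simp [hd, haj0, h0]
      exact absurd (binVal_lt a b j haj0 hbj habove) (not_lt.mpr hle)
    set T := Finset.univ.filter (fun l : Fin m => d l ≠ 0 ∧ l < j) with hT
    by_cases hk : T.card < k
    · -- truncFirst d k = d
      have ht : truncFirst m d k = d := by
        funext i
        by_cases hdi : d i ≠ 0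
        · have hiS : i ∈ S := Finset.mem_filter.mpr ⟨Finset.mem_univ _, hdi⟩
          have hij : i ≤ j := S.le_max' i hiS
          have hsub : Finset.univ.filter (fun l : Fin m => d l ≠ 0 ∧ l < i) ⊆ T := by
            intro l hl
            rw [Finset.mem_filter] at hl ⊢
            exact ⟨hl.1, hl.2.1, lt_of_lt_of_le hl.2.2 hij⟩
          have : (Finset.univ.filter (fun l : Fin m => d l ≠ 0 ∧ l < i)).card < k :=
            lt_of_le_of_lt (Finset.card_le_card hsub) hk
          rw [truncFirst, if_pos ⟨hdi, this⟩, zmod2_ne_zero hdi]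
        · push_neg at hdi
          rw [truncFirst, if_neg (by simp [hdi]), hdi]
      rw [ht]
      have : a + d = b := by
        funext i
        have : ∀ x y : ZMod 2, x + (x + y) = y := by decide
        simpa [hd] using this (a i) (b i)
      rw [this]; exact hb
    · intro h0
      have := congrFun h0 j
      rw [Pi.add_apply, truncFirst, if_neg (by
        rintro ⟨_, hc⟩
        exact hk (by simpa [hT] using hc))] at this
      rw [haj] at this
      simp at this

/-- if `H` is an `m × w` matrix over `ZMod 2` none of whose columns is zero,
then there is a reordering of the columns of `H` in nonincreasing order of binary value,
and for any such enumeration `C₁, …, C_w` (given by a permutation `σ`) all unfolding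
intermediate columns `Cᵢ + [Cᵢ + Cᵢ₊₁][k]` are nonzero. -/
theorem sorted_columns_unfolding_nonzero (m w : ℕ)
    (H : Matrix (Fin m) (Fin w) (ZMod 2))
    (hnz : ∀ j : Fin w, (fun i => H i j) ≠ 0) :
    (∃ σ : Equiv.Perm (Fin w), ∀ i j : Fin w, i ≤ j →
        binVal m (fun r => H r (σ j)) ≤ binVal m (fun r => H r (σ i))) ∧
    (∀ σ : Equiv.Perm (Fin w),
      (∀ i j : Fin w, i ≤ j →
        binVal m (fun r => H r (σ j)) ≤ binVal m (fun r => H r (σ i))) →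
      ∀ (i : ℕ) (hi : i + 1 < w) (k : ℕ),
        (fun r => H r (σ ⟨i, by omega⟩)) +
          truncFirst m
            ((fun r => H r (σ ⟨i, by omega⟩)) + fun r => H r (σ ⟨i + 1, hi⟩)) k ≠ 0) := by
  constructor
  · set f : Fin w → ℕ := fun j => binVal m (fun r => H r j) with hf
    refine ⟨Fin.revPerm.trans (Tuple.sort f), ?_⟩
    intro i j hij
    have hmono := Tuple.monotone_sort f (Fin.rev_le_rev.mpr hij)
    simpa [Equiv.trans_apply, hf] using hmono
  · intro σ hσ i hi k
    apply key_lemma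
    · exact hnz _
    · exact hnz _
    · exact hσ ⟨i, by omega⟩ ⟨i + 1, hi⟩ (by simp)
end

section
/- For all w, t with 1 ≤ 2t ≤ w there is a fault-tolerant flag-gadget circuit for extracting a weight-(w+1) stabilizer of a distance-(2t+1) quantum code using at most (2t+1)·t·⌈log₂(w+1)⌉ flag qubits and one CNOT at a time. Precisely: there exist f ≤ (2t+1)·t·⌈log₂(w+1)⌉, L ∈ ℕ, a sequence of columns c₀, …, c_L : Fin f → ZMod 2 with c₀ = c_L = 0 and any two consecutive columns differing in at most one coordinate, positions 0 ≤ d₀ < d₁ < ⋯ < d_w ≤ L, and a recovery map R : (Fin f → ZMod 2) → (Fin (w+1) → ZMod 2), such that, with F^c the matrix whose p-th column is c_p (p ∈ Fin (L+1)) and D : Matrix (Fin (w+1)) (Fin (L+1)) (ZMod 2) given by D i p = 1 iff p ≤ dᵢ, every pair (e_s : Fin (L+1) → ZMod 2, e_f : Fin f → ZMod 2) with wt(e_s) + wt(e_f) ≤ t satisfies min(wt x, (w+1) − wt x) ≤ wt(e_s) + wt(e_f), where x := D.mulVec e_s + R(F^c.mulVec e_s + e_f). -/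
namespace FG11
open Matrix


lemma zmod2_cases (a : ZMod 2) : a = 0 ∨ a = 1 := by revert a; decide

lemma even_cast_zmod2 {n : ℕ} (h : Even n) : (n : ZMod 2) = 0 := by
  obtain ⟨k, rfl⟩ := h; push_cast; rw [← two_mul]
  exact mul_eq_zero_of_left (by decide) _

/-- Combinatorial weight bound. -/
lemma weight_bound {P : Type*} [DecidableEq P] (w : ℕ) (A : Finset P) (ι lam : P → ℕ)
    (h1 : ∀ p ∈ A, lam p ≤ ι p ∧ ι p ≤ lam p + 1 ∧ ι p ≤ w + 1)
    (h2 : ∀ v, 1 ≤ v → v ≤ w → Even (A.filter fun p => lam p = v).card) :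
    2 * min (hammingNorm fun i : Fin (w+1) => ((A.filter fun p => ι p ≤ (i:ℕ)).card : ZMod 2))
        ((w + 1) - hammingNorm fun i : Fin (w+1) =>
          ((A.filter fun p => ι p ≤ (i:ℕ)).card : ZMod 2)) ≤ A.card + 1 := by
  classical
  set B : Finset P := A.filter (fun p => lam p = 0 ∨ lam p = w + 1) with hB
  set S1 : Finset ℕ := (A \ B).image lam with hS1
  -- members of A \ B have lam in [1, w]
  have hmemAB : ∀ p ∈ A \ B, 1 ≤ lam p ∧ lam p ≤ w := by
    intro p hp
    rw [Finset.mem_sdiff, hB, Finset.mem_filter] at hp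
    obtain ⟨hpA, hpB⟩ := hp
    have := h1 p hpA
    push_neg at hpB
    have := hpB hpA
    omega
  have hS1sub : ∀ v ∈ S1, 1 ≤ v ∧ v ≤ w := by
    intro v hv
    rw [hS1, Finset.mem_image] at hv
    obtain ⟨p, hp, rfl⟩ := hv
    exact hmemAB p hp
  -- fibers over A\B coincide with fibers over A for v in [1,w]
  have hfib : ∀ v, 1 ≤ v → v ≤ w → (A \ B).filter (fun p => lam p = v) =
      A.filter (fun p => lam p = v) := by
    intro v hv1 hvw
    ext p
    simp only [Finset.mem_filter, Finset.mem_sdiff, hB]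
    constructor
    · rintro ⟨⟨hpA, _⟩, hl⟩; exact ⟨hpA, hl⟩
    · rintro ⟨hpA, hl⟩
      exact ⟨⟨hpA, fun hmem => by rcases hmem.2 with h0 | h0 <;> omega⟩, hl⟩
  -- 2·|S1| ≤ |A \ B|
  have hS1card : 2 * S1.card ≤ (A \ B).card := by
    have hterm : ∀ v ∈ S1, 2 ≤ ((A \ B).filter (fun p => lam p = v)).card := by
      intro v hv
      obtain ⟨hv1, hvw⟩ := hS1sub v hv
      have heven : Even ((A \ B).filter (fun p => lam p = v)).card := by
        rw [hfib v hv1 hvw]; exact h2 v hv1 hvw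
      have hpos : 0 < ((A \ B).filter (fun p => lam p = v)).card := by
        rw [Finset.card_pos]
        rw [hS1, Finset.mem_image] at hv
        obtain ⟨p, hp, rfl⟩ := hv
        exact ⟨p, Finset.mem_filter.mpr ⟨hp, rfl⟩⟩
      obtain ⟨k, hk⟩ := heven
      omega
    calc 2 * S1.card = ∑ _v ∈ S1, 2 := by rw [Finset.sum_const, smul_eq_mul, mul_comm]
    _ ≤ ∑ v ∈ S1, ((A \ B).filter (fun p => lam p = v)).card := Finset.sum_le_sum hterm
    _ = (A \ B).card := (Finset.card_eq_sum_card_image lam (A \ B)).symm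
  -- pointwise: for 1 ≤ i ≤ w with i ∉ S1, the count parity is ε
  have hpoint : ∀ i : ℕ, 1 ≤ i → i ≤ w → i ∉ S1 →
      ((A.filter fun p => ι p ≤ i).card : ZMod 2)
        = ((B.filter fun p => ι p ≤ 1).card : ZMod 2) := by
    intro i hi1 hiw hiS
    have hsplit : A.filter (fun p => ι p ≤ i) =
        B.filter (fun p => ι p ≤ i) ∪ (A \ B).filter (fun p => ι p ≤ i) := by
      ext p
      simp only [Finset.mem_filter, Finset.mem_union, Finset.mem_sdiff, hB]
      constructor
      · rintro ⟨hpA, hpi⟩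
        by_cases hc : lam p = 0 ∨ lam p = w + 1
        · exact Or.inl ⟨⟨hpA, hc⟩, hpi⟩
        · exact Or.inr ⟨⟨hpA, fun hmem => hc hmem.2⟩, hpi⟩
      · rintro (⟨⟨hpA, _⟩, hpi⟩ | ⟨⟨hpA, _⟩, hpi⟩) <;> exact ⟨hpA, hpi⟩
    have hdisj : Disjoint (B.filter (fun p => ι p ≤ i)) ((A \ B).filter (fun p => ι p ≤ i)) := by
      apply Finset.disjoint_filter_filter
      exact Finset.disjoint_left.mpr (fun a ha hb => (Finset.mem_sdiff.mp hb).2 ha)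
    rw [hsplit, Finset.card_union_of_disjoint hdisj]
    -- the B part: condition ι ≤ i equals ι ≤ 1
    have hBpart : B.filter (fun p => ι p ≤ i) = B.filter (fun p => ι p ≤ 1) := by
      apply Finset.filter_congr
      intro p hp
      rw [hB, Finset.mem_filter] at hp
      obtain ⟨hpA, h0 | h0⟩ := hp <;> have := h1 p hpA <;>
        constructor <;> intro <;> omega
    -- the A \ B part is even
    have hABeven : Even (((A \ B).filter (fun p => ι p ≤ i)).card) := by
      rw [Finset.card_eq_sum_card_image lam]
      apply Finset.even_sum
      intro v hv
      rw [Finset.mem_image] at hv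
      obtain ⟨p0, hp0, rfl⟩ := hv
      rw [Finset.mem_filter] at hp0
      obtain ⟨hp0AB, hp0i⟩ := hp0
      obtain ⟨hv1, hvw⟩ := hmemAB p0 hp0AB
      have hp0A : p0 ∈ A := (Finset.mem_sdiff.mp hp0AB).1
      have hvlt : lam p0 < i := by
        have hne : lam p0 ≠ i := fun he =>
          hiS (he ▸ Finset.mem_image_of_mem lam hp0AB)
        have := h1 p0 hp0A
        omega
      have hfull : ((A \ B).filter (fun p => ι p ≤ i)).filter (fun p => lam p = lam p0)
          = A.filter (fun p => lam p = lam p0) := by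
        ext p
        simp only [Finset.mem_filter, Finset.mem_sdiff]
        constructor
        · rintro ⟨⟨⟨hpA, _⟩, _⟩, hl⟩; exact ⟨hpA, hl⟩
        · rintro ⟨hpA, hl⟩
          have hpB : p ∉ B := fun hmem => by
            rw [hB, Finset.mem_filter] at hmem
            rcases hmem.2 with h0 | h0 <;> omega
          have := h1 p hpA
          exact ⟨⟨⟨hpA, hpB⟩, by omega⟩, hl⟩
      rw [hfull]
      exact h2 _ hv1 hvw
    push_cast
    rw [even_cast_zmod2 hABeven, add_zero, hBpart]
  -- case analysis on ε
  set epsn : ℕ := (B.filter fun p => ι p ≤ 1).card with hepsn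
  -- i = 0 case when B = ∅
  have hzero : B = ∅ → (A.filter fun p => ι p ≤ 0) = ∅ := by
    intro hBe
    rw [Finset.filter_eq_empty_iff]
    intro p hp hle
    have hh := h1 p hp
    have : p ∈ B := by
      rw [hB, Finset.mem_filter]; exact ⟨hp, Or.inl (by omega)⟩
    rw [hBe] at this
    exact absurd this (Finset.notMem_empty p)
  -- exceptional set
  set T : Finset (Fin (w+1)) :=
    Finset.univ.filter (fun i : Fin (w+1) => (i:ℕ) ∈ S1 ∨ ((i:ℕ) = 0 ∧ B ≠ ∅)) with hT
  have hmain : ∀ i : Fin (w+1), i ∉ T →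
      ((A.filter fun p => ι p ≤ (i:ℕ)).card : ZMod 2) = (epsn : ZMod 2) := by
    intro i hiT
    rw [hT, Finset.mem_filter] at hiT
    push_neg at hiT
    obtain ⟨hiS1, hi0⟩ := hiT (Finset.mem_univ i)
    rcases Nat.eq_zero_or_pos (i:ℕ) with hi | hi
    · have hBe : B = ∅ := hi0 hi
      have h0 : (A.filter fun p => ι p ≤ (i:ℕ)).card = 0 := by
        rw [hi, Finset.card_eq_zero]
        exact hzero hBe
      have heps0 : epsn = 0 := by
        rw [hepsn, hBe]
        simp
      rw [h0, heps0]
    · have hiw : (i:ℕ) ≤ w := by omega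
      exact hpoint (i:ℕ) hi hiw hiS1
  -- bound on T.card
  have hTcard : T.card ≤ S1.card + (if B = ∅ then 0 else 1) := by
    have himg : T.card = (T.image (fun i : Fin (w+1) => (i:ℕ))).card :=
      (Finset.card_image_of_injective T Fin.val_injective).symm
    have hsub : T.image (fun i : Fin (w+1) => (i:ℕ)) ⊆
        S1 ∪ (if B = ∅ then (∅ : Finset ℕ) else {0}) := by
      intro v hv
      rw [Finset.mem_image] at hv
      obtain ⟨i, hiT, rfl⟩ := hv
      rw [hT, Finset.mem_filter] at hiT
      rcases hiT.2 with h | ⟨h, hne⟩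
      · exact Finset.mem_union_left _ h
      · refine Finset.mem_union_right _ ?_
        rw [if_neg hne, h]
        exact Finset.mem_singleton_self 0
    have := Finset.card_le_card hsub
    have hle := Finset.card_union_le S1 (if B = ∅ then (∅ : Finset ℕ) else {0})
    have hite : (if B = ∅ then (∅ : Finset ℕ) else {0}).card = if B = ∅ then 0 else 1 := by
      split_ifs <;> simp
    omega
  -- min ≤ T.card
  have hminT : min (hammingNorm fun i : Fin (w+1) => ((A.filter fun p => ι p ≤ (i:ℕ)).card : ZMod 2))
      ((w + 1) - hammingNorm fun i : Fin (w+1) =>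
        ((A.filter fun p => ι p ≤ (i:ℕ)).card : ZMod 2)) ≤ T.card := by
    set Du : Fin (w+1) → ZMod 2 :=
      fun i => ((A.filter fun p => ι p ≤ (i:ℕ)).card : ZMod 2) with hDu
    rcases zmod2_cases (epsn : ZMod 2) with he | he
    · refine le_trans (min_le_left _ _) ?_
      have : Finset.univ.filter (fun i => Du i ≠ 0) ⊆ T := by
        intro i hi
        rw [Finset.mem_filter] at hi
        by_contra hiT
        exact hi.2 ((hmain i hiT).trans he)
      exact Finset.card_le_card this
    · refine le_trans (min_le_right _ _) ?_
      have htot := Finset.card_filter_add_card_filter_not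
        (s := (Finset.univ : Finset (Fin (w+1)))) (p := fun i => Du i ≠ 0)
      have hcardu : (Finset.univ : Finset (Fin (w+1))).card = w + 1 := by simp
      have hsub2 : Finset.univ.filter (fun i => ¬ Du i ≠ 0) ⊆ T := by
        intro i hi
        rw [Finset.mem_filter] at hi
        by_contra hiT
        push_neg at hi
        have hdu : Du i = 1 := (hmain i hiT).trans he
        rw [hi.2] at hdu
        exact one_ne_zero hdu.symm
      have hN : hammingNorm Du = (Finset.univ.filter (fun i => Du i ≠ 0)).card := rfl
      have := Finset.card_le_card hsub2
      omega
  -- final arithmetic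
  have hBsub : B ⊆ A := Finset.filter_subset _ _
  have hsd : (A \ B).card = A.card - B.card := Finset.card_sdiff_of_subset hBsub
  have hBle : B.card ≤ A.card := Finset.card_le_card hBsub
  by_cases hBe : B = ∅
  · rw [if_pos hBe] at hTcard
    have : B.card = 0 := by rw [hBe]; simp
    omega
  · rw [if_neg hBe] at hTcard
    have : 0 < B.card := Finset.card_pos.mpr (Finset.nonempty_of_ne_empty hBe)
    omega




/-- If all odd power sums up to 2t-1 vanish (char 2), then all fibers over nonzero values
are even, provided |A| ≤ 2t. -/
lemma even_fibers {K : Type*} [Field K] [CharP K 2] [DecidableEq K] {P : Type*} [DecidableEq P]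
    (t : ℕ) (A : Finset P) (ξ : P → K)
    (hcard : A.card ≤ 2 * t)
    (hps : ∀ l, l < t → ∑ p ∈ A, ξ p ^ (2 * l + 1) = 0) :
    ∀ v : K, v ≠ 0 → Even (A.filter fun p => ξ p = v).card := by
  classical
  haveI : Fact (Nat.Prime 2) := ⟨Nat.prime_two⟩
  -- all power sums 1..2t vanish
  have hall : ∀ n, 1 ≤ n → n ≤ 2 * t → ∑ p ∈ A, ξ p ^ n = 0 := by
    intro n
    induction n using Nat.strong_induction_on with
    | _ n ih =>
      intro hn1 hn2
      rcases Nat.even_or_odd n with he | ho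
      · obtain ⟨k, hk⟩ := he
        have hk1 : 1 ≤ k := by omega
        have hk2 : k ≤ 2 * t := by omega
        have hklt : k < n := by omega
        have := ih k hklt hk1 hk2
        have hpow : ∀ p : P, ξ p ^ n = (ξ p ^ k) ^ 2 := by
          intro p; rw [← pow_mul]; congr 1; omega
        calc ∑ p ∈ A, ξ p ^ n = ∑ p ∈ A, (ξ p ^ k) ^ 2 := by
              exact Finset.sum_congr rfl fun p _ => hpow p
        _ = (∑ p ∈ A, ξ p ^ k) ^ 2 := (sum_pow_char (R := K) (p := 2) A _).symm
        _ = 0 := by rw [this]; exact zero_pow (by norm_num)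
      · obtain ⟨l, hl⟩ := ho
        have : l < t := by omega
        rw [hl]
        exact hps l this
  -- Vandermonde argument
  intro v hv
  set V : Finset K := (A.image ξ).erase 0 with hV
  set n := V.card with hn
  set σ : Fin n → K := fun i => ((V.equivFin.symm i) : K) with hσ
  have hσmem : ∀ i, σ i ∈ V := fun i => (V.equivFin.symm i).2
  have hσinj : Function.Injective σ :=
    fun i j h => V.equivFin.symm.injective (Subtype.ext h)
  have hσne : ∀ i, σ i ≠ 0 := fun i => Finset.ne_of_mem_erase (hσmem i)
  have hnle : n ≤ 2 * t := by
    calc n ≤ (A.image ξ).card := Finset.card_erase_le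
    _ ≤ A.card := Finset.card_image_le
    _ ≤ 2 * t := hcard
  -- the linear system
  have hsys : ∀ e : Fin n,
      ∑ i : Fin n, ((A.filter fun p => ξ p = σ i).card : K) * σ i ^ ((e : ℕ) + 1) = 0 := by
    intro e
    have h0 := hall ((e : ℕ) + 1) (by omega) (by have := e.2; omega)
    rw [Finset.sum_comp (fun y => y ^ ((e : ℕ) + 1)) ξ] at h0
    -- drop the value 0 from the image
    have herase : ∑ y ∈ (A.image ξ).erase 0,
        (A.filter fun p => ξ p = y).card • y ^ ((e : ℕ) + 1)
        = ∑ y ∈ A.image ξ, (A.filter fun p => ξ p = y).card • y ^ ((e : ℕ) + 1) := by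
      apply Finset.sum_erase
      rw [zero_pow (by omega : (e : ℕ) + 1 ≠ 0), smul_zero]
    rw [← herase, ← hV] at h0
    -- reindex by the equiv
    rw [← Finset.sum_attach V (fun y => (A.filter fun p => ξ p = y).card • y ^ ((e : ℕ) + 1))] at h0
    have h2 : ∑ y : {x // x ∈ V},
        (A.filter fun p => ξ p = (y : K)).card • (y : K) ^ ((e : ℕ) + 1) = 0 := by
      rw [Finset.univ_eq_attach]; exact h0
    have h3 := (Equiv.sum_comp V.equivFin.symm (fun y : {x // x ∈ V} =>
      (A.filter fun p => ξ p = (y : K)).card • (y : K) ^ ((e : ℕ) + 1))).trans h2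
    simpa [σ, nsmul_eq_mul] using h3
  -- build the matrix
  set M : Matrix (Fin n) (Fin n) K := Matrix.of fun e i => σ i ^ ((e : ℕ) + 1) with hM
  have hMv : M = (Matrix.vandermonde σ)ᵀ * Matrix.diagonal σ := by
    ext e i
    rw [Matrix.mul_diagonal]
    simp only [M, Matrix.of_apply, Matrix.transpose_apply, Matrix.vandermonde_apply]
    rw [pow_succ]
  have hdet : M.det ≠ 0 := by
    rw [hMv, Matrix.det_mul, Matrix.det_transpose, Matrix.det_vandermonde,
      Matrix.det_diagonal]
    apply mul_ne_zero
    · rw [Finset.prod_ne_zero_iff]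
      intro i _
      rw [Finset.prod_ne_zero_iff]
      intro j hj
      rw [Finset.mem_Ioi] at hj
      exact sub_ne_zero_of_ne fun h => (Nat.lt_irrefl _ (hσinj h.symm ▸ hj)).elim
    · rw [Finset.prod_ne_zero_iff]
      exact fun i _ => hσne i
  have hMveq : M.mulVec (fun i => ((A.filter fun p => ξ p = σ i).card : K)) = 0 := by
    funext e
    rw [Matrix.mulVec]
    simpa [dotProduct, M, mul_comm] using hsys e
  have hinj : Function.Injective M.mulVec :=
    Matrix.mulVec_injective_iff_isUnit.mpr ((Matrix.isUnit_iff_isUnit_det M).mpr hdet.isUnit)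
  have hcv : (fun i => ((A.filter fun p => ξ p = σ i).card : K)) = 0 := by
    apply hinj
    rw [hMveq, Matrix.mulVec_zero]
  -- conclude
  by_cases hvV : v ∈ V
  · obtain ⟨i, hi⟩ : ∃ i : Fin n, σ i = v := ⟨V.equivFin ⟨v, hvV⟩, by simp [σ]⟩
    have := congrFun hcv i
    rw [hi] at this
    simp only [Pi.zero_apply] at this
    rw [CharP.cast_eq_zero_iff K 2] at this
    exact Nat.even_iff.mpr (Nat.mod_eq_zero_of_dvd this)
  · have : (A.filter fun p => ξ p = v) = ∅ := by
      rw [Finset.filter_eq_empty_iff]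
      intro p hp h
      exact hvV (Finset.mem_erase.mpr ⟨hv, h ▸ Finset.mem_image_of_mem ξ hp⟩)
    rw [this]
    simp




/-- `(p + (f-1-q)) / f = p / f + (1 if q < p % f)` for `q < f`. -/
lemma div_formula (f p q : ℕ) (hf : 0 < f) (hq : q < f) :
    (p + (f - 1 - q)) / f = p / f + if q < p % f then 1 else 0 := by
  conv_lhs => rw [← Nat.div_add_mod p f]
  rw [Nat.add_assoc, Nat.mul_add_div hf]
  congr 1
  have hs : p % f < f := Nat.mod_lt _ hf
  split_ifs with h
  · exact Nat.div_eq_of_lt_le (by omega) (by omega)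
  · exact Nat.div_eq_of_lt (by omega)

/-- The basic codeword pattern: block-content of the flag column in region `lam`. -/
noncomputable def baseF {K : Type*} [Field K] [Module (ZMod 2) K] (w b : ℕ) (hb : 0 < b)
    (x : ℕ → K) (φ : K →ₗ[ZMod 2] (Fin b → ZMod 2)) (lam inner : ℕ) : ZMod 2 :=
  if lam ≤ w then φ (x lam ^ (2 * (inner / b) + 1)) ⟨inner % b, Nat.mod_lt _ hb⟩ else 0

/-- The flag column at circuit position `p`, flag coordinate `q`. -/
noncomputable def colF {K : Type*} [Field K] [Module (ZMod 2) K] (w b : ℕ) (hb : 0 < b)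
    (x : ℕ → K) (φ : K →ₗ[ZMod 2] (Fin b → ZMod 2)) (f m p q : ℕ) : ZMod 2 :=
  baseF w b hb x φ ((p + (f - 1 - q)) / f) (q % m)

/-- Key bound: any error vector `u` with few total faults+flags has small (or co-small)
data effect. -/
lemma key_bound {K : Type*} [Field K] [CharP K 2] [Module (ZMod 2) K] [DecidableEq K]
    (w t b m f L : ℕ) (hb : 0 < b) (ht : 1 ≤ t)
    (hm : m = t * b) (hf : f = (2 * t + 1) * m) (hL : L = (w + 1) * f)
    (x : ℕ → K) (hx0 : x 0 = 0) (hxinj : ∀ i ≤ w, ∀ j ≤ w, x i = x j → i = j)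
    (φ : K →ₗ[ZMod 2] (Fin b → ZMod 2)) (hφ : Function.Injective ⇑φ)
    (u : Fin (L + 1) → ZMod 2)
    (hbound : hammingNorm u +
      hammingNorm (fun q : Fin f => ∑ p : Fin (L+1), colF w b hb x φ f m p q * u p) ≤ 2 * t) :
    2 * min
      (hammingNorm fun i : Fin (w+1) =>
        ∑ p : Fin (L+1), (if (p : ℕ) ≤ (i : ℕ) * f then (1 : ZMod 2) else 0) * u p)
      ((w + 1) - hammingNorm fun i : Fin (w+1) =>
        ∑ p : Fin (L+1), (if (p : ℕ) ≤ (i : ℕ) * f then (1 : ZMod 2) else 0) * u p)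
      ≤ hammingNorm u + 1 := by
  classical
  have hmpos : 0 < m := by rw [hm]; positivity
  have hfpos : 0 < f := by rw [hf]; positivity
  set A : Finset (Fin (L+1)) := Finset.univ.filter (fun p => u p ≠ 0) with hA
  have hAcard : hammingNorm u = A.card := rfl
  -- restrict sums to A
  have hsum : ∀ (g : Fin (L+1) → ZMod 2), (∑ p, g p * u p) = ∑ p ∈ A, g p := by
    intro g
    rw [← Finset.sum_subset (Finset.subset_univ A) (fun p _ hp => by
      have : u p = 0 := by
        by_contra hne
        exact hp (Finset.mem_filter.mpr ⟨Finset.mem_univ p, hne⟩)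
      rw [this, mul_zero])]
    apply Finset.sum_congr rfl
    intro p hp
    have : u p = 1 := by
      rcases zmod2_cases (u p) with h | h
      · exact absurd h (Finset.mem_filter.mp hp).2
      · exact h
    rw [this, mul_one]
  -- the flag syndrome
  set Fu : Fin f → ZMod 2 := fun q => ∑ p ∈ A, colF w b hb x φ f m p q with hFu
  have hFueq : (fun q : Fin f => ∑ p : Fin (L+1), colF w b hb x φ f m p q * u p) = Fu := by
    funext q; exact hsum _
  rw [hFueq] at hbound
  -- find a clean zero block
  set B1 : Finset ℕ := A.image (fun p : Fin (L+1) => ((p : ℕ) % f) / m) with hB1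
  set B2 : Finset ℕ := (Finset.univ.filter (fun q : Fin f => Fu q ≠ 0)).image
    (fun q : Fin f => (q : ℕ) / m) with hB2
  have hB1card : B1.card ≤ A.card := Finset.card_image_le
  have hB2card : B2.card ≤ hammingNorm Fu := Finset.card_image_le
  have hnotsub : ¬ (Finset.range (2 * t + 1) ⊆ B1 ∪ B2) := by
    intro hsub
    have h1 := Finset.card_le_card hsub
    have h2 := Finset.card_union_le B1 B2
    rw [Finset.card_range] at h1
    omega
  obtain ⟨l, hlr, hlB⟩ := Finset.not_subset.mp hnotsub
  rw [Finset.mem_range] at hlr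
  have hlB1 : l ∉ B1 := fun h => hlB (Finset.mem_union_left _ h)
  have hlB2 : l ∉ B2 := fun h => hlB (Finset.mem_union_right _ h)
  have hlmf : l * m + m ≤ f := by
    have : (l + 1) * m ≤ (2 * t + 1) * m := Nat.mul_le_mul_right m hlr
    rw [add_mul, one_mul] at this
    omega
  -- the region functions
  set lam : Fin (L+1) → ℕ := fun p => ((p : ℕ) + (f - 1 - l * m)) / f with hlam
  set ι : Fin (L+1) → ℕ := fun p => ((p : ℕ) + (f - 1)) / f with hι
  -- cleanness: for p ∈ A and q in block l, the column entry is base of lam p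
  have hclean : ∀ p ∈ A, ∀ q : ℕ, l * m ≤ q → q < l * m + m →
      ((p : ℕ) + (f - 1 - q)) / f = lam p := by
    intro p hp q hq1 hq2
    have hql : q < f := by omega
    have hlml : l * m < f := by omega
    rw [div_formula f _ q hfpos hql, hlam]
    simp only
    rw [div_formula f _ (l * m) hfpos hlml]
    congr 1
    -- q < p % f ↔ l*m < p % f, using that (p % f)/m ≠ l
    have hne : ((p : ℕ) % f) / m ≠ l := fun h => hlB1 (hB1 ▸ (h ▸ Finset.mem_image_of_mem _ hp))
    have hcases : (p : ℕ) % f ≤ l * m ∨ l * m + m ≤ (p : ℕ) % f := by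
      rcases Nat.lt_or_ge (((p : ℕ) % f) / m) l with hlt | hge
      · left
        have := (Nat.div_lt_iff_lt_mul hmpos).mp hlt
        omega
      · right
        have hgt : l < ((p : ℕ) % f) / m := by omega
        have h1 : (l + 1) * m ≤ (((p : ℕ) % f) / m) * m := Nat.mul_le_mul_right m hgt
        have h2 : (((p : ℕ) % f) / m) * m ≤ (p : ℕ) % f := Nat.div_mul_le_self _ _
        have h3 : (l + 1) * m = l * m + m := by ring
        omega
    rcases hcases with hc | hc
    · rw [if_neg (by omega : ¬ q < (p : ℕ) % f), if_neg (by omega : ¬ l * m < (p : ℕ) % f)]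
    · rw [if_pos (by omega : q < (p : ℕ) % f), if_pos (by omega : l * m < (p : ℕ) % f)]
  -- power sums vanish
  set ξ : Fin (L+1) → K := fun p => if lam p ≤ w then x (lam p) else 0 with hξ
  have hps : ∀ jr, jr < t → ∑ p ∈ A, ξ p ^ (2 * jr + 1) = 0 := by
    intro jr hjr
    have hzero : φ (∑ p ∈ A, ξ p ^ (2 * jr + 1)) = 0 := by
      funext β
      -- the coordinate index
      set inner : ℕ := jr * b + (β : ℕ) with hinner
      have hinnerm : inner < m := by
        have hβ : (β : ℕ) < b := β.2
        have : jr * b + b ≤ t * b := by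
          have : (jr + 1) * b ≤ t * b := Nat.mul_le_mul_right b (by omega)
          rw [add_mul, one_mul] at this
          omega
        omega
      set q : ℕ := l * m + inner with hq
      have hqf : q < f := by omega
      have hqL : (⟨q, hqf⟩ : Fin f) = ⟨q, hqf⟩ := rfl
      -- Fu at q is zero
      have hFuq : Fu ⟨q, hqf⟩ = 0 := by
        by_contra hne
        apply hlB2
        rw [hB2, Finset.mem_image]
        refine ⟨⟨q, hqf⟩, Finset.mem_filter.mpr ⟨Finset.mem_univ _, hne⟩, ?_⟩
        show q / m = l
        have hq' : q = inner + m * l := by rw [hq]; ring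
        rw [hq', Nat.add_mul_div_left inner l hmpos, Nat.div_eq_of_lt hinnerm, zero_add]
      -- rewrite Fu q as the φ-image of the power sum
      have hterm : ∀ p ∈ A, colF w b hb x φ f m p q = φ (ξ p ^ (2 * jr + 1)) β := by
        intro p hp
        rw [colF, hclean p hp q (by omega) (by omega)]
        have hqm : q % m = inner := by
          have hq' : q = inner + m * l := by rw [hq]; ring
          rw [hq', Nat.add_mul_mod_self_left]
          exact Nat.mod_eq_of_lt hinnerm
        rw [hqm, baseF]
        have hdiv : inner / b = jr := by
          have : inner = (β : ℕ) + jr * b := by rw [hinner]; ring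
          rw [this, Nat.add_mul_div_right _ _ hb, Nat.div_eq_of_lt β.2, zero_add]
        have hmod : inner % b = (β : ℕ) := by
          have : inner = (β : ℕ) + jr * b := by rw [hinner]; ring
          rw [this, Nat.add_mul_mod_self_right]
          exact Nat.mod_eq_of_lt β.2
        split_ifs with hcond
        · rw [hξ]
          simp only
          rw [if_pos hcond, hdiv]
          exact congrArg _ (Fin.ext hmod)
        · rw [hξ]
          simp only
          rw [if_neg hcond, zero_pow (by omega : 2 * jr + 1 ≠ 0), map_zero]
          rfl
      rw [map_sum]
      rw [Finset.sum_apply]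
      calc ∑ p ∈ A, φ (ξ p ^ (2 * jr + 1)) β
          = ∑ p ∈ A, colF w b hb x φ f m p q := by
            exact (Finset.sum_congr rfl hterm).symm
      _ = Fu ⟨q, hqf⟩ := rfl
      _ = 0 := hFuq
      
    have := hφ (hzero.trans (map_zero φ).symm)
    exact this
  -- even fibers
  have hAle : A.card ≤ 2 * t := by rw [← hAcard]; omega
  have heven := even_fibers t A ξ hAle hps
  have hlamfib : ∀ v, 1 ≤ v → v ≤ w → Even (A.filter fun p => lam p = v).card := by
    intro v hv1 hvw
    have hxv : x v ≠ 0 := by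
      intro h0
      have := hxinj v hvw 0 (by omega) (h0.trans hx0.symm)
      omega
    have hset : (A.filter fun p => lam p = v) = (A.filter fun p => ξ p = x v) := by
      ext p
      simp only [Finset.mem_filter, and_congr_right_iff]
      intro _
      constructor
      · intro h
        rw [hξ]
        simp only
        rw [h, if_pos hvw]
      · intro h
        rw [hξ] at h
        simp only at h
        split_ifs at h with hcond
        · exact hxinj _ hcond _ hvw h
        · exact absurd h.symm hxv
    rw [hset]
    exact heven _ hxv
  -- relations between lam and ι
  have hrel : ∀ p : Fin (L+1), lam p ≤ ι p ∧ ι p ≤ lam p + 1 ∧ ι p ≤ w + 1 := by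
    intro p
    have hp : (p : ℕ) ≤ L := Nat.lt_succ_iff.mp p.2
    have hlm1 : l * m ≤ f - 1 := by omega
    refine ⟨?_, ?_, ?_⟩
    · apply Nat.div_le_div_right
      omega
    · have hle : (p : ℕ) + (f - 1) ≤ ((p : ℕ) + (f - 1 - l * m)) + f := by omega
      calc ι p = ((p : ℕ) + (f - 1)) / f := rfl
      _ ≤ (((p : ℕ) + (f - 1 - l * m)) + f) / f := Nat.div_le_div_right hle
      _ = lam p + 1 := by rw [Nat.add_div_right _ hfpos]
    · show ((p : ℕ) + (f - 1)) / f ≤ w + 1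
      have h2 : (p : ℕ) + (f - 1) < (w + 2) * f := by
        have he : (w + 2) * f = (w + 1) * f + f := by ring
        omega
      have h3 : ((p : ℕ) + (f - 1)) / f < w + 2 := (Nat.div_lt_iff_lt_mul hfpos).mpr h2
      omega
  -- rewrite the data effect as a fiber count
  have hDu : (fun i : Fin (w+1) =>
        ∑ p : Fin (L+1), (if (p : ℕ) ≤ (i : ℕ) * f then (1 : ZMod 2) else 0) * u p)
      = fun i : Fin (w+1) => ((A.filter fun p => ι p ≤ (i : ℕ)).card : ZMod 2) := by
    funext i
    rw [hsum]
    have hcond : ∀ p : Fin (L+1), ((p : ℕ) ≤ (i : ℕ) * f) ↔ (ι p ≤ (i : ℕ)) := by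
      intro p
      have hiff : ((p : ℕ) + (f - 1)) / f < (i : ℕ) + 1 ↔
          (p : ℕ) + (f - 1) < ((i : ℕ) + 1) * f := Nat.div_lt_iff_lt_mul hfpos
      have he : ((i : ℕ) + 1) * f = (i : ℕ) * f + f := by ring
      constructor
      · intro h
        have : ι p < (i : ℕ) + 1 := hiff.mpr (by omega)
        omega
      · intro h
        have h' : ((p : ℕ) + (f - 1)) / f ≤ (i : ℕ) := h
        have : (p : ℕ) + (f - 1) < ((i : ℕ) + 1) * f := hiff.mp (by omega)
        omega
    calc ∑ p ∈ A, (if (p : ℕ) ≤ (i : ℕ) * f then (1 : ZMod 2) else 0)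
        = ∑ p ∈ A, (if ι p ≤ (i : ℕ) then (1 : ZMod 2) else 0) := by
          apply Finset.sum_congr rfl
          intro p _
          rcases hcond p with ⟨h1, h2⟩
          by_cases hc : ι p ≤ (i : ℕ)
          · rw [if_pos hc, if_pos (by tauto)]
          · rw [if_neg hc, if_neg (by tauto)]
    _ = ((A.filter fun p => ι p ≤ (i : ℕ)).card : ZMod 2) := by
          rw [Finset.sum_boole]
  rw [hDu, hAcard]
  exact weight_bound w A (fun p => ι p) (fun p => lam p) (fun p _ => hrel p) hlamfib



lemma zmod2_add_self (a : ZMod 2) : a + a = 0 := by revert a; decide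

lemma hN_add_le {I : Type*} [Fintype I] (a b : I → ZMod 2) :
    hammingNorm (a + b) ≤ hammingNorm a + hammingNorm b := by
  have h1 := hammingDist_triangle (a + b) b 0
  rw [hammingDist_zero_right, hammingDist_zero_right, hammingDist_eq_hammingNorm] at h1
  simpa [show -a = a from funext fun i => ZMod.neg_eq_self_mod_two _] using h1

end FG11

open FG11 in
/-- for all `w, t` with `1 ≤ 2t ≤ w` there is a fault-tolerant flag-gadget
circuit for extracting a weight-`(w+1)` stabilizer of a distance-`(2t+1)` quantum code
using at most `(2t+1)·t·⌈log₂(w+1)⌉` flag qubits and one CNOT at a time. -/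
theorem exists_fault_tolerant_flag_gadget (w t : ℕ) (ht : 1 ≤ 2 * t) (htw : 2 * t ≤ w) :
    ∃ (f L : ℕ) (c : Fin (L + 1) → Fin f → ZMod 2) (d : Fin (w + 1) → ℕ)
      (R : (Fin f → ZMod 2) → Fin (w + 1) → ZMod 2),
      f ≤ (2 * t + 1) * t * Nat.clog 2 (w + 1) ∧
      c 0 = 0 ∧
      c (Fin.last L) = 0 ∧
      (∀ p : Fin L, hammingNorm (c p.castSucc + c p.succ) ≤ 1) ∧
      (∀ i j : Fin (w + 1), i < j → d i < d j) ∧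
      d (Fin.last w) ≤ L ∧
      (∀ (e_s : Fin (L + 1) → ZMod 2) (e_f : Fin f → ZMod 2),
        hammingNorm e_s + hammingNorm e_f ≤ t →
        ∀ x : Fin (w + 1) → ZMod 2,
          x = (Matrix.of fun (i : Fin (w + 1)) (p : Fin (L + 1)) =>
                  if (p : ℕ) ≤ d i then (1 : ZMod 2) else 0).mulVec e_s +
              R ((Matrix.of fun (q : Fin f) (p : Fin (L + 1)) => c p q).mulVec e_s + e_f) →
          min (hammingNorm x) ((w + 1) - hammingNorm x) ≤
            hammingNorm e_s + hammingNorm e_f) := by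
  classical
  have ht1 : 1 ≤ t := by omega
  have hw2 : 2 ≤ w := by omega
  haveI : Fact (Nat.Prime 2) := ⟨Nat.prime_two⟩
  set b := Nat.clog 2 (w + 1) with hbdef
  have hb : 0 < b := Nat.clog_pos one_lt_two (by omega)
  set K := GaloisField 2 b with hK
  haveI : Fintype K := Fintype.ofFinite K
  -- an injective labelling with x 0 = 0
  have hcard : w + 1 ≤ Fintype.card K := by
    rw [← Nat.card_eq_fintype_card, GaloisField.card 2 b (by omega)]
    exact Nat.le_pow_clog one_lt_two (w + 1)
  obtain ⟨g⟩ : Nonempty (Fin (w + 1) ↪ K) :=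
    Function.Embedding.nonempty_of_card_le (by simpa using hcard)
  set x : ℕ → K := fun nn => if h : nn < w + 1 then g ⟨nn, h⟩ + g ⟨0, by omega⟩ else 0 with hxdef
  have hx0 : x 0 = 0 := by
    rw [hxdef]
    simp only
    rw [dif_pos (by omega : 0 < w + 1)]
    exact CharTwo.add_self_eq_zero _
  have hxinj : ∀ i ≤ w, ∀ j ≤ w, x i = x j → i = j := by
    intro i hi j hj hij
    rw [hxdef] at hij
    simp only at hij
    rw [dif_pos (by omega : i < w + 1), dif_pos (by omega : j < w + 1)] at hij
    have h2 := g.injective (add_right_cancel hij)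
    exact congrArg Fin.val h2
  -- the coordinate map
  have hfr : Module.finrank (ZMod 2) K = b := GaloisField.finrank 2 (by omega)
  set bas : Module.Basis (Fin b) (ZMod 2) K :=
    (Module.finBasis (ZMod 2) K).reindex (finCongr hfr) with hbas
  set φ : K →ₗ[ZMod 2] (Fin b → ZMod 2) := bas.equivFun.toLinearMap with hφdef
  have hφ : Function.Injective ⇑φ := bas.equivFun.injective
  -- the gadget data
  set m := t * b with hmdef
  set f := (2 * t + 1) * m with hfdef
  set L := (w + 1) * f with hLdef
  have hmpos : 0 < m := by positivity
  have hfpos : 0 < f := by positivity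
  set c : Fin (L + 1) → Fin f → ZMod 2 :=
    fun p q => colF w b hb x φ f m (p : ℕ) (q : ℕ) with hcdef
  set Dmat : Matrix (Fin (w + 1)) (Fin (L + 1)) (ZMod 2) :=
    Matrix.of fun (i : Fin (w + 1)) (p : Fin (L + 1)) =>
      if (p : ℕ) ≤ (i : ℕ) * f then (1 : ZMod 2) else 0 with hDdef
  set Fmat : Matrix (Fin f) (Fin (L + 1)) (ZMod 2) :=
    Matrix.of fun (q : Fin f) (p : Fin (L + 1)) => c p q with hFdef
  set cost : (Fin f → ZMod 2) → (Fin (L + 1) → ZMod 2) → ℕ :=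
    fun mo e' => hammingNorm e' + hammingNorm (Fmat.mulVec e' + mo) with hcostdef
  have hbest : ∀ mo : Fin f → ZMod 2, ∃ e', ∀ e'', cost mo e' ≤ cost mo e'' := by
    intro mo
    obtain ⟨e', -, he'⟩ := Finset.exists_min_image (Finset.univ : Finset (Fin (L + 1) → ZMod 2))
      (cost mo) ⟨0, Finset.mem_univ 0⟩
    exact ⟨e', fun e'' => he' e'' (Finset.mem_univ _)⟩
  set R : (Fin f → ZMod 2) → Fin (w + 1) → ZMod 2 :=
    fun mo => Dmat.mulVec (Classical.choose (hbest mo)) with hRdef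
  refine ⟨f, L, c, fun i => (i : ℕ) * f, R, ?_, ?_, ?_, ?_, ?_, ?_, ?_⟩
  · -- flag count
    rw [hfdef, hmdef, hbdef]
    rw [Nat.mul_assoc]
  · -- c 0 = 0
    funext q
    rw [hcdef]
    simp only [Fin.val_zero]
    rw [colF]
    have h0 : (0 + (f - 1 - (q : ℕ))) / f = 0 := by
      apply Nat.div_eq_of_lt
      omega
    rw [h0, baseF, if_pos (by omega : 0 ≤ w), hx0, zero_pow (by omega : 2 * ((q : ℕ) % m / b) + 1 ≠ 0),
      map_zero]
    rfl
  · -- c last = 0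
    funext q
    rw [hcdef]
    simp only [Fin.val_last]
    rw [colF]
    have h0 : (L + (f - 1 - (q : ℕ))) / f = w + 1 := by
      have h1 : L + (f - 1 - (q : ℕ)) = (f - 1 - (q : ℕ)) + (w + 1) * f := by omega
      rw [h1, Nat.add_mul_div_right _ _ hfpos, Nat.div_eq_of_lt (by omega), zero_add]
    rw [h0, baseF, if_neg (by omega : ¬ w + 1 ≤ w)]
    rfl
  · -- consecutive columns differ in at most one coordinate
    intro p
    have hdiff : ∀ q : Fin f, (q : ℕ) ≠ (p : ℕ) % f → c p.castSucc q = c p.succ q := by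
      intro q hq
      rw [hcdef]
      simp only [Fin.coe_castSucc, Fin.val_succ]
      rw [colF, colF]
      congr 1
      have hqf : (q : ℕ) < f := q.2
      have hadd : (p : ℕ) + 1 + (f - 1 - (q : ℕ)) = ((p : ℕ) + (f - 1 - (q : ℕ))) + 1 := by omega
      rw [hadd, Nat.succ_div, if_neg, add_zero]
      -- ¬ f ∣ (p + (f-1-q)) + 1
      intro hdvd
      have he : (p : ℕ) + (f - 1 - (q : ℕ)) + 1
          = f * ((p : ℕ) / f) + ((p : ℕ) % f + (f - (q : ℕ))) := by
        have := Nat.div_add_mod (p : ℕ) f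
        omega
      rw [he] at hdvd
      have hdvd2 : f ∣ ((p : ℕ) % f + (f - (q : ℕ))) :=
        (Nat.dvd_add_right (Dvd.intro _ rfl)).mp hdvd
      obtain ⟨cc, hcc⟩ := hdvd2
      have hmod : (p : ℕ) % f < f := Nat.mod_lt _ hfpos
      have hcc2 : cc < 2 := by
        by_contra hcc2
        push_neg at hcc2
        have : f * 2 ≤ f * cc := Nat.mul_le_mul_left f hcc2
        omega
      have hcc1 : 1 ≤ cc := by
        by_contra hcc1
        push_neg at hcc1
        interval_cases cc
        omega
      have : cc = 1 := by omega
      rw [this, Nat.mul_one] at hcc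
      exact hq (by omega)
    have hsub : Finset.univ.filter (fun q : Fin f => (c p.castSucc + c p.succ) q ≠ 0)
        ⊆ {⟨(p : ℕ) % f, Nat.mod_lt _ hfpos⟩} := by
      intro q hqmem
      rw [Finset.mem_filter] at hqmem
      rw [Finset.mem_singleton]
      by_contra hne
      apply hqmem.2
      have hqne : (q : ℕ) ≠ (p : ℕ) % f := fun h => hne (Fin.ext h)
      have := hdiff q hqne
      rw [Pi.add_apply, this]
      exact zmod2_add_self _
    calc hammingNorm (c p.castSucc + c p.succ)
        = (Finset.univ.filter (fun q : Fin f => (c p.castSucc + c p.succ) q ≠ 0)).card := rfl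
    _ ≤ ({⟨(p : ℕ) % f, Nat.mod_lt _ hfpos⟩} : Finset (Fin f)).card := Finset.card_le_card hsub
    _ = 1 := Finset.card_singleton _
  · -- d strictly monotone
    intro i j hij
    exact (Nat.mul_lt_mul_right hfpos).mpr (by exact_mod_cast hij)
  · -- d last ≤ L
    simp only [Fin.val_last]
    rw [hLdef]
    exact Nat.mul_le_mul_right f (by omega)
  · -- fault tolerance
    intro e_s e_f hk xx hxx
    set mo := Fmat.mulVec e_s + e_f with hmodef
    set ehat := Classical.choose (hbest mo) with hehat
    have hmin := Classical.choose_spec (hbest mo)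
    set u := e_s + ehat with hudef
    have hz2 : ∀ a c : ZMod 2, a + (a + c) = c := fun a c => by rw [← add_assoc, zmod2_add_self, zero_add]
    have hefid : Fmat.mulVec e_s + mo = e_f := by
      funext q
      rw [hmodef]
      simp only [Pi.add_apply]
      exact hz2 _ _
    have hcost : hammingNorm ehat + hammingNorm (Fmat.mulVec ehat + mo)
        ≤ hammingNorm e_s + hammingNorm e_f := by
      calc hammingNorm ehat + hammingNorm (Fmat.mulVec ehat + mo)
          = cost mo ehat := rfl
      _ ≤ cost mo e_s := hmin e_s
      _ = hammingNorm e_s + hammingNorm (Fmat.mulVec e_s + mo) := rfl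
      _ = hammingNorm e_s + hammingNorm e_f := by rw [hefid]
    have hxu : xx = Dmat.mulVec u := by
      rw [hxx, hudef, Matrix.mulVec_add]
    have hFuadd : Fmat.mulVec u = (Fmat.mulVec e_s + mo) + (Fmat.mulVec ehat + mo) := by
      rw [hudef, Matrix.mulVec_add]
      funext q
      simp only [Pi.add_apply]
      generalize Fmat.mulVec e_s q = a1
      generalize Fmat.mulVec ehat q = a2
      generalize mo q = a3
      revert a1 a2 a3
      intro a1 a2 a3; rw [add_add_add_comm, zmod2_add_self, add_zero]
    have hFule : hammingNorm (Fmat.mulVec u)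
        ≤ hammingNorm e_f + hammingNorm (Fmat.mulVec ehat + mo) := by
      rw [hFuadd, hefid]
      exact hN_add_le _ _
    have hule : hammingNorm u ≤ hammingNorm e_s + hammingNorm ehat := hN_add_le _ _
    have hFmv : (fun q : Fin f => ∑ p : Fin (L+1), colF w b hb x φ f m p q * u p)
        = Fmat.mulVec u := by
      funext q
      rfl
    have hkey := key_bound w t b m f L hb ht1 hmdef hfdef hLdef x hx0 hxinj φ hφ u
      (by rw [hFmv]; omega)
    have hDmv : (fun i : Fin (w+1) =>
        ∑ p : Fin (L+1), (if (p : ℕ) ≤ (i : ℕ) * f then (1 : ZMod 2) else 0) * u p)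
        = Dmat.mulVec u := by
      funext i
      rfl
    rw [hDmv] at hkey
    rw [hxu]
    omega
end

section
/- Let t ≥ 1, let α be a type, let s : Fin ((t+1)^2) → α, and let B ⊆ Fin ((t+1)^2) with |B| ≤ t be such that s is constant on every maximal interval of consecutive indices disjoint from B. Then some value of s is attained on at least t+1 indices all lying in a single maximal interval disjoint from B; consequently the maximal multiplicity max over a of |{i : s i = a}| is at least t+1, and every value attained on at least t+1 indices (in particular every value of maximal multiplicity) is attained at some index outside B. -/
/-- let `t ≥ 1`, `s : Fin ((t+1)^2) → α`, and `B` a set of at most `t`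
indices such that `s` is constant on every (maximal) interval of consecutive indices
disjoint from `B`. Then some value of `s` is attained on at least `t+1` indices all
lying in a single interval disjoint from `B`; consequently the maximal multiplicity of a
value of `s` is at least `t+1`, and every value attained on at least `t+1` indices is
attained at some index outside `B`. -/
theorem majority_subpattern_from_error_free_interval (t : ℕ) (ht : 1 ≤ t)
    (α : Type*) [DecidableEq α] (s : Fin ((t + 1) ^ 2) → α)
    (B : Finset (Fin ((t + 1) ^ 2))) (hB : B.card ≤ t)
    (hconst : ∀ i j : Fin ((t + 1) ^ 2), i ≤ j →
      (∀ k, i ≤ k → k ≤ j → k ∉ B) → s i = s j) :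
    (∃ i j : Fin ((t + 1) ^ 2), i ≤ j ∧ t ≤ (j : ℕ) - (i : ℕ) ∧
      (∀ k, i ≤ k → k ≤ j → k ∉ B) ∧ (∀ k, i ≤ k → k ≤ j → s k = s i)) ∧
    (∃ a : α, t + 1 ≤ (Finset.univ.filter fun i => s i = a).card) ∧
    (∀ a : α, t + 1 ≤ (Finset.univ.filter fun i => s i = a).card →
      ∃ i, i ∉ B ∧ s i = a) := by
  classical
  -- f i = number of elements of B below i, as an element of Fin (t+1)
  have hfbound : ∀ i : Fin ((t + 1) ^ 2), (B.filter (fun x => x < i)).card < t + 1 :=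
    fun i => lt_of_le_of_lt (le_trans (Finset.card_filter_le _ _) hB) (Nat.lt_succ_self t)
  let f : Fin ((t + 1) ^ 2) → Fin (t + 1) := fun i => ⟨(B.filter (fun x => x < i)).card, hfbound i⟩
  have hmaps : ∀ a ∈ (Finset.univ \ B), f a ∈ (Finset.univ : Finset (Fin (t + 1))) :=
    fun a _ => Finset.mem_univ _
  have hcard : (Finset.univ : Finset (Fin (t + 1))).card * t < (Finset.univ \ B).card := by
    rw [Finset.card_univ, Fintype.card_fin,
      Finset.card_sdiff_of_subset (Finset.subset_univ _), Finset.card_univ, Fintype.card_fin]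
    have h2 : (t + 1) ^ 2 = (t + 1) * t + (t + 1) := by ring
    omega
  obtain ⟨b, -, hb⟩ := Finset.exists_lt_card_fiber_of_mul_lt_card_of_maps_to hmaps hcard
  set F := (Finset.univ \ B).filter (fun a => f a = b) with hF
  have hFne : F.Nonempty := Finset.card_pos.mp (by omega)
  set i := F.min' hFne with hi
  set j := F.max' hFne with hj
  have hiF : i ∈ F := F.min'_mem hFne
  have hjF : j ∈ F := F.max'_mem hFne
  have hij : i ≤ j := F.min'_le _ hjF
  have hiB : i ∉ B := (Finset.mem_sdiff.mp (Finset.mem_filter.mp hiF).1).2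
  have hjB : j ∉ B := (Finset.mem_sdiff.mp (Finset.mem_filter.mp hjF).1).2
  have hnotB : ∀ k, i ≤ k → k ≤ j → k ∉ B := by
    intro k hik hkj hkB
    have hik' : i < k := lt_of_le_of_ne hik (by rintro rfl; exact hiB hkB)
    have hkj' : k < j := lt_of_le_of_ne hkj (by rintro rfl; exact hjB hkB)
    have hsub : insert k (B.filter (fun x => x < i)) ⊆ B.filter (fun x => x < j) := by
      intro x hx
      rcases Finset.mem_insert.mp hx with rfl | hx
      · exact Finset.mem_filter.mpr ⟨hkB, hkj'⟩
      · obtain ⟨hx1, hx2⟩ := Finset.mem_filter.mp hx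
        exact Finset.mem_filter.mpr ⟨hx1, lt_of_lt_of_le hx2 hij⟩
    have hknot : k ∉ B.filter (fun x => x < i) := by
      simp only [Finset.mem_filter]
      rintro ⟨-, h⟩
      exact absurd h (not_lt.mpr hik)
    have h1 : (B.filter (fun x => x < i)).card + 1 ≤ (B.filter (fun x => x < j)).card := by
      calc (B.filter (fun x => x < i)).card + 1
          = (insert k (B.filter (fun x => x < i))).card :=
            (Finset.card_insert_of_notMem hknot).symm
        _ ≤ _ := Finset.card_le_card hsub
    have heq : f i = f j := by
      rw [(Finset.mem_filter.mp hiF).2, (Finset.mem_filter.mp hjF).2]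
    have heq' : (B.filter (fun x => x < i)).card = (B.filter (fun x => x < j)).card :=
      congrArg Fin.val heq
    omega
  have hFIcc : F ⊆ Finset.Icc i j := by
    intro x hx
    exact Finset.mem_Icc.mpr ⟨F.min'_le _ hx, F.le_max' _ hx⟩
  have hIcc_card : (Finset.Icc i j).card = (j : ℕ) + 1 - (i : ℕ) := by
    rw [Fin.card_Icc]
  have htj : t ≤ (j : ℕ) - (i : ℕ) := by
    have h1 : t + 1 ≤ (Finset.Icc i j).card := le_trans hb (Finset.card_le_card hFIcc)
    have h2 : (i : ℕ) ≤ (j : ℕ) := hij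
    omega
  have hsk : ∀ k, i ≤ k → k ≤ j → s k = s i := by
    intro k hik hkj
    exact (hconst i k hik (fun m h1 h2 => hnotB m h1 (le_trans h2 hkj))).symm
  refine ⟨⟨i, j, hij, htj, hnotB, hsk⟩, ⟨s i, ?_⟩, ?_⟩
  · have hsub : Finset.Icc i j ⊆ Finset.univ.filter (fun k => s k = s i) := by
      intro k hk
      obtain ⟨h1, h2⟩ := Finset.mem_Icc.mp hk
      exact Finset.mem_filter.mpr ⟨Finset.mem_univ _, hsk k h1 h2⟩
    have := Finset.card_le_card hsub
    have h2 : (i : ℕ) ≤ (j : ℕ) := hij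
    omega
  · intro a ha
    by_contra h
    push_neg at h
    have hsub : Finset.univ.filter (fun k => s k = a) ⊆ B := by
      intro x hx
      by_contra hxB
      exact absurd ((Finset.mem_filter.mp hx).2) (fun he => (h x hxB he).elim)
    have := Finset.card_le_card hsub
    omega
end
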